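/- arXiv:2003.13061 — 16 statements merged into one kernel-verified Lean document; each statement's English description precedes it below -/
import Mathlib

section
/- A relative ideal I of a numerical semigroup S is canonical (i.e., I is a ℤ-translate of the standard canonical ideal K(S)) if and only if its type t(I) = |PF(I)| equals 1. -/
open Set Pointwise

def IsNumSgrp (S : Set ℤ) : Prop :=
  0 ∈ S ∧ (∀ a ∈ S, ∀ b ∈ S, a + b ∈ S) ∧ (∀ a ∈ S, 0 ≤ a) ∧ ∃ c : ℤ, ∀ z, c ≤ z → z ∈ S

def maxId (S : Set ℤ) : Set ℤ := S \ {0}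

def subI (I J : Set ℤ) : Set ℤ := {x : ℤ | ∀ j ∈ J, x + j ∈ I}

def PF (S I : Set ℤ) : Set ℤ := subI I (maxId S) \ I

def stdK (S : Set ℤ) (F : ℤ) : Set ℤ := {x : ℤ | 0 ≤ x ∧ F - x ∉ S}

def IsFrobOf (I : Set ℤ) (FI : ℤ) : Prop := FI ∉ I ∧ ∀ z : ℤ, FI < z → z ∈ I

def IsRelIdeal (S I : Set ℤ) : Prop :=
  I.Nonempty ∧ (∀ i ∈ I, ∀ s ∈ S, i + s ∈ I) ∧ ∃ z ∈ S, ∀ i ∈ I, z + i ∈ S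

def tilde (I : Set ℤ) (d : ℤ) : Set ℤ := (fun x => x + d) '' I

def IsAlmostCanonical (S : Set ℤ) (F : ℤ) (I : Set ℤ) : Prop :=
  ∃ FI : ℤ, IsFrobOf I FI ∧ subI (tilde I (F - FI)) (maxId S) = stdK S F ∪ {F}

def IsMinGen (S : Set ℤ) (x : ℤ) : Prop := x ∈ maxId S \ (maxId S + maxId S)

def IsMult (S : Set ℤ) (e : ℤ) : Prop := e ∈ maxId S ∧ ∀ m ∈ maxId S, e ≤ m

def genK (S : Set ℤ) (F : ℤ) : Set ℤ := (AddSubmonoid.closure (stdK S F) : Set ℤ)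

def nK (K : Set ℤ) : ℕ → Set ℤ
  | 0 => {0}
  | 1 => K
  | n + 2 => nK K (n + 1) + K

def IsGAS (S : Set ℤ) (F : ℤ) : Prop :=
  stdK S F + stdK S F = stdK S F ∨
  ∃ X : Finset ℤ, (∀ x ∈ X, IsMinGen S x) ∧ (∀ x ∈ X, ∀ y ∈ X, x - y ∉ PF S S) ∧
    (stdK S F + stdK S F) \ stdK S F = (fun x => F - x) '' (X : Set ℤ) ∪ {F}

def IsAlmostSym (S : Set ℤ) (F : ℤ) : Prop := subI S (maxId S) = stdK S F ∪ {F}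

def apery (I : Set ℤ) (e : ℤ) : Set ℤ := {i ∈ I | i - e ∉ I}

lemma maxId_pos {S : Set ℤ} (hS : IsNumSgrp S) {m : ℤ} (hm : m ∈ maxId S) : 1 ≤ m := by
  obtain ⟨hmS, hm0⟩ := hm
  have h1 := hS.2.2.1 m hmS
  have : m ≠ 0 := by simpa using hm0
  omega

lemma mem_trans {I : Set ℤ} {x z : ℤ} : z ∈ (fun k => x + k) '' I ↔ z - x ∈ I := by
  constructor
  · rintro ⟨k, hk, rfl⟩; simpa using hk
  · intro h; exact ⟨z - x, h, by ring⟩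

lemma PF_stdK {S : Set ℤ} {F : ℤ} (hS : IsNumSgrp S) (hF : IsFrobOf S F)
    (hFpos : 0 < F) : PF S (stdK S F) = {F} := by
  ext x
  simp only [PF, subI, stdK, Set.mem_diff, Set.mem_setOf_eq, Set.mem_singleton_iff]
  constructor
  · rintro ⟨hsub, hnot⟩
    by_contra hxF
    rcases lt_trichotomy x F with h | h | h
    · by_cases hFx : F - x ∈ S
      · have hm : F - x ∈ maxId S := ⟨hFx, by simp; omega⟩
        obtain ⟨_, h2⟩ := hsub _ hm
        apply h2
        have : F - (x + (F - x)) = 0 := by ring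
        rw [this]; exact hS.1
      · have hx0 : 0 ≤ x := by
          by_contra hneg
          exact hFx (hF.2 _ (by omega))
        exact hnot ⟨hx0, hFx⟩
    · exact hxF h
    · refine hnot ⟨by omega, fun hc => ?_⟩
      have := hS.2.2.1 _ hc; omega
  · rintro rfl
    constructor
    · intro m hm
      have hm1 := maxId_pos hS hm
      refine ⟨by omega, fun hc => ?_⟩
      have := hS.2.2.1 _ hc; omega
    · rintro ⟨_, h2⟩
      exact h2 (by simpa using hS.1)

lemma PF_translate (S I : Set ℤ) (x : ℤ) :
    PF S ((fun k => x + k) '' I) = (fun k => x + k) '' PF S I := by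
  ext z
  simp only [PF, Set.mem_diff, mem_trans, subI, Set.mem_setOf_eq]
  constructor
  · rintro ⟨h1, h2⟩
    refine ⟨fun j hj => ?_, h2⟩
    have h3 := h1 j hj
    have he : z - x + j = z + j - x := by ring
    rw [he]; exact h3
  · rintro ⟨h1, h2⟩
    refine ⟨fun j hj => ?_, h2⟩
    have h3 := h1 j hj
    have he : z + j - x = z - x + j := by ring
    rw [he]; exact h3

lemma exists_frob_of_rel {S I : Set ℤ} (hS : IsNumSgrp S) {F : ℤ} (hF : IsFrobOf S F)
    (hI : IsRelIdeal S I) : ∃ g, IsFrobOf I g := by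
  classical
  obtain ⟨⟨i0, hi0⟩, hadd, z, hzS, hz⟩ := hI
  have hbdd : ∃ b : ℤ, ∀ w, w ∉ I → w ≤ b := by
    refine ⟨i0 + F, fun w hw => ?_⟩
    by_contra hgt
    exact hw (by
      have : w - i0 ∈ S := hF.2 _ (by omega)
      have := hadd i0 hi0 _ this
      simpa using this)
  have hne : ∃ w : ℤ, w ∉ I := by
    refine ⟨-z - 1, fun hc => ?_⟩
    have := hS.2.2.1 _ (hz _ hc)
    omega
  obtain ⟨g, hg, hmax⟩ := Int.exists_greatest_of_bdd hbdd hne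
  refine ⟨g, hg, fun w hw => ?_⟩
  by_contra hc
  have := hmax w hc
  omega

lemma type_one_canonical {S I : Set ℤ} (hS : IsNumSgrp S) {F : ℤ} (hF : IsFrobOf S F)
    (hFpos : 0 < F) (hI : IsRelIdeal S I) {g : ℤ} (hg : IsFrobOf I g)
    (hPF : PF S I = {g}) : I = (fun k => (g - F) + k) '' stdK S F := by
  classical
  have hadd := hI.2.1
  apply Set.eq_of_subset_of_subset
  · -- I ⊆ translate of K
    intro w hw
    rw [mem_trans]
    have h2 : g - w ∉ S := by
      intro hc
      rcases eq_or_ne (g - w) 0 with h0 | h0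
      · have hgw : g = w := by omega
        exact hg.1 (hgw ▸ hw)
      · have hgI : w + (g - w) ∈ I := hadd w hw _ hc
        have he : w + (g - w) = g := by ring
        rw [he] at hgI
        exact hg.1 hgI
    constructor
    · by_contra hneg
      exact h2 (hF.2 _ (by omega))
    · intro hc
      apply h2
      have he : F - (w - (g - F)) = g - w := by ring
      rwa [he] at hc
  · -- translate of K ⊆ I
    by_contra hcon
    rw [Set.not_subset] at hcon
    have hne : ∃ w : ℤ, (w - (g - F) ∈ stdK S F ∧ w ∉ I) := by
      obtain ⟨w, hw1, hw2⟩ := hcon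
      rw [mem_trans] at hw1
      exact ⟨w, hw1, hw2⟩
    have hbdd : ∃ b : ℤ, ∀ w, (w - (g - F) ∈ stdK S F ∧ w ∉ I) → w ≤ b := by
      refine ⟨g, fun w hw => ?_⟩
      by_contra hgt
      exact hw.2 (hg.2 _ (by omega))
    obtain ⟨z0, ⟨hz0K, hz0I⟩, hmax⟩ := Int.exists_greatest_of_bdd hbdd hne
    have hz0PF : z0 ∈ PF S I := by
      refine ⟨fun m hm => ?_, hz0I⟩
      have hm1 := maxId_pos hS hm
      by_contra hc
      have hKm : z0 + m - (g - F) ∈ stdK S F := by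
        refine ⟨by obtain ⟨h1, _⟩ := hz0K; omega, fun hcs => ?_⟩
        have heq : F - (z0 - (g - F)) = m + (F - (z0 + m - (g - F))) := by ring
        exact hz0K.2 (heq ▸ hS.2.1 m hm.1 _ hcs)
      have := hmax (z0 + m) ⟨hKm, hc⟩
      omega
    rw [hPF, Set.mem_singleton_iff] at hz0PF
    apply hz0K.2
    have he : F - (z0 - (g - F)) = 0 := by omega
    rw [he]; exact hS.1

theorem stmt1 (S : Set ℤ) (hS : IsNumSgrp S) (F : ℤ) (hF : IsFrobOf S F) (hFpos : 0 < F)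
    (I : Set ℤ) (hI : IsRelIdeal S I) :
    (∃ x : ℤ, I = (fun k => x + k) '' stdK S F) ↔ (PF S I).ncard = 1 := by
  constructor
  · rintro ⟨x, rfl⟩
    rw [PF_translate, PF_stdK hS hF hFpos]
    simp
  · intro h
    obtain ⟨f, hf⟩ := Set.ncard_eq_one.mp h
    obtain ⟨g, hg⟩ := exists_frob_of_rel hS hF hI
    have hgPF : g ∈ PF S I :=
      ⟨fun m hm => hg.2 _ (by have := maxId_pos hS hm; omega), hg.1⟩
    rw [hf, Set.mem_singleton_iff] at hgPF
    subst hgPF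
    exact ⟨g - F, type_one_canonical hS hF hFpos hI hg hf⟩
end

section
/- For a numerical semigroup S with canonical ideal K and maximal ideal M, one has K − M = K ∪ {F(S)}. In particular every canonical ideal of S is almost canonical. -/
open Set Pointwise

theorem stmt2 (S : Set ℤ) (hS : IsNumSgrp S) (F : ℤ) (hF : IsFrobOf S F) (hFpos : 0 < F) :
    subI (stdK S F) (maxId S) = stdK S F ∪ {F} ∧
    ∀ I : Set ℤ, IsRelIdeal S I → (∃ x : ℤ, I = (fun k => x + k) '' stdK S F) →
      IsAlmostCanonical S F I := by
  obtain ⟨h0, hadd, hnn, -⟩ := hS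
  obtain ⟨hFnS, hFgt⟩ := hF
  have hFK : F ∉ stdK S F := fun h => h.2 (by simpa using h0)
  have key : subI (stdK S F) (maxId S) = stdK S F ∪ {F} := by
    ext x
    constructor
    · intro hx
      by_cases hxF : x = F
      · exact Or.inr hxF
      · left
        have hnonneg : 0 ≤ x := by
          by_contra hneg
          push_neg at hneg
          have hm : F - x ∈ maxId S :=
            ⟨hFgt _ (by linarith), by simp; intro h; linarith⟩
          have := hx _ hm
          rw [show x + (F - x) = F by ring] at this
          exact hFK this
        refine ⟨hnonneg, fun hFx => ?_⟩
        have hne : F - x ≠ 0 := fun h => hxF (by linarith)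
        have := hx (F - x) ⟨hFx, hne⟩
        rw [show x + (F - x) = F by ring] at this
        exact hFK this
    · rintro (hK | hxF) m ⟨hmS, hm0⟩
      · have hm1 : 0 < m := lt_of_le_of_ne (hnn m hmS) (fun h => hm0 h.symm)
        refine ⟨by linarith [hK.1], fun h => hK.2 ?_⟩
        have := hadd _ h _ hmS
        rwa [show F - (x + m) + m = F - x by ring] at this
      · rw [mem_singleton_iff] at hxF
        subst hxF
        have hm1 : 0 < m := lt_of_le_of_ne (hnn m hmS) (fun h => hm0 h.symm)
        refine ⟨by linarith, fun h => ?_⟩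
        have := hnn _ h
        omega
  refine ⟨key, fun I _ ⟨x, hIx⟩ => ?_⟩
  refine ⟨x + F, ⟨?_, ?_⟩, ?_⟩
  · intro h
    rw [hIx] at h
    obtain ⟨k, hk, hke⟩ := h
    have hke' : x + k = x + F := hke
    have : k = F := by linarith
    exact hFK (this ▸ hk)
  · intro z hz
    rw [hIx]
    exact ⟨z - x, ⟨by linarith, fun h => hFnS (by have := hnn _ h; omega)⟩, by ring⟩
  · have ht : tilde I (F - (x + F)) = stdK S F := by
      ext z
      simp only [tilde, hIx, mem_image]
      constructor
      · rintro ⟨y, ⟨k, hk, hky⟩, hyz⟩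
        have : k = z := by omega
        exact this ▸ hk
      · intro hz
        exact ⟨x + z, ⟨z, hz, rfl⟩, by ring⟩
    rw [ht, key]
end

section
/- For every relative ideal I of a numerical semigroup S, the inequality g(I) + g(S) ≥ F(S) + t(I) holds, where g(I) = |ℕ \ Ĩ|, g(S) = |ℕ \ S|, and t(I) = |PF(I)|; and equality holds if and only if I is almost canonical. -/
open Set Pointwise

lemma frob_unique {I : Set ℤ} {a b : ℤ} (ha : IsFrobOf I a) (hb : IsFrobOf I b) : a = b := by
  by_contra h
  rcases lt_or_gt_of_ne h with h' | h'
  · exact hb.1 (ha.2 b h')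
  · exact ha.1 (hb.2 a h')

theorem stmt3 (S : Set ℤ) (hS : IsNumSgrp S) (F : ℤ) (hF : IsFrobOf S F) (hFpos : 0 < F)
    (I : Set ℤ) (hI : IsRelIdeal S I) (FI : ℤ) (hFI : IsFrobOf I FI) :
    F + ((PF S I).ncard : ℤ) ≤ ({x : ℤ | 0 ≤ x ∧ x ∉ tilde I (F - FI)}.ncard : ℤ)
        + ({x : ℤ | 0 ≤ x ∧ x ∉ S}.ncard : ℤ) ∧
    (F + ((PF S I).ncard : ℤ) = ({x : ℤ | 0 ≤ x ∧ x ∉ tilde I (F - FI)}.ncard : ℤ)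
        + ({x : ℤ | 0 ≤ x ∧ x ∉ S}.ncard : ℤ) ↔ IsAlmostCanonical S F I) := by
  obtain ⟨hS0, hSadd, hSnn, c, hc⟩ := hS
  obtain ⟨hFn, hFg⟩ := hF
  set d := F - FI with hd
  set J := tilde I d with hJ
  set Kp := stdK S F ∪ ({F} : Set ℤ) with hKp
  set L := subI J (maxId S) with hL
  set A := {x : ℤ | 0 ≤ x ∧ x ∉ J} with hA
  set B := {x : ℤ | 0 ≤ x ∧ x ∉ S} with hB
  set T := Set.Icc (0:ℤ) F with hT
  have hJmem : ∀ x : ℤ, x ∈ J ↔ x - d ∈ I := by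
    intro x
    constructor
    · rintro ⟨i, hi, rfl⟩; simpa using hi
    · intro h; exact ⟨x - d, h, by ring⟩
  have hFJn : F ∉ J := by
    rw [hJmem]
    have : F - d = FI := by omega
    rw [this]; exact hFI.1
  have hFJg : ∀ z, F < z → z ∈ J := by
    intro z hz; rw [hJmem]; exact hFI.2 _ (by omega)
  have hJid : ∀ x ∈ J, ∀ s ∈ S, x + s ∈ J := by
    intro x hx s hs
    rw [hJmem] at hx ⊢
    have h2 : x + s - d = (x - d) + s := by ring
    rw [h2]; exact hI.2.1 _ hx s hs
  have hJnn : ∀ x ∈ J, 0 ≤ x := by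
    intro x hx
    by_contra h
    push_neg at h
    have h1 : F - x ∈ S := hFg _ (by omega)
    have h2 := hJid x hx _ h1
    rw [show x + (F - x) = F from by ring] at h2
    exact hFJn h2
  have hJK : J ⊆ Kp := by
    intro x hx
    by_cases hxF : x = F
    · right; simp [hxF]
    · left
      refine ⟨hJnn x hx, ?_⟩
      intro hFx
      have h2 := hJid x hx _ hFx
      rw [show x + (F - x) = F from by ring] at h2
      exact hFJn h2
  have hLK : L ⊆ Kp := by
    intro x hx
    by_cases hxF : x = F
    · right; simp [hxF]
    · left
      have hFx : F - x ∉ S := by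
        intro hFx
        have hM : F - x ∈ maxId S := ⟨hFx, by simp; omega⟩
        have h2 := hx _ hM
        rw [show x + (F - x) = F from by ring] at h2
        exact hFJn h2
      refine ⟨?_, hFx⟩
      by_contra h
      push_neg at h
      exact hFx (hFg _ (by omega))
  have hJL : J ⊆ L := fun x hx m hm => hJid x hx m hm.1
  have hFL : F ∈ L := by
    intro m hm
    have hm1 := hSnn m hm.1
    have hm2 : m ≠ 0 := by simpa using hm.2
    exact hFJg _ (by omega)
  -- finiteness
  have hTfin : T.Finite := Set.finite_Icc _ _
  have hAT : A ⊆ T := by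
    rintro x ⟨h1, h2⟩
    refine ⟨h1, ?_⟩
    by_contra h; push_neg at h; exact h2 (hFJg _ h)
  have hBT : B ⊆ T := by
    rintro x ⟨h1, h2⟩
    refine ⟨h1, ?_⟩
    by_contra h; push_neg at h; exact h2 (hFg _ h)
  have hKpJT : Kp \ J ⊆ T := by
    rintro x ⟨hx, hxJ⟩
    have hxF : x ≤ F := by
      by_contra h; push_neg at h; exact hxJ (hFJg _ h)
    rcases hx with hxK | hxF'
    · exact ⟨hxK.1, hxF⟩
    · rw [Set.mem_singleton_iff] at hxF'
      rw [hxF']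
      exact ⟨le_of_lt hFpos, le_refl F⟩
  -- e1
  have hUnion1 : (J ∩ T) ∪ A = T := by
    apply Set.Subset.antisymm
    · rintro x (⟨_, hx⟩ | hx)
      · exact hx
      · exact hAT hx
    · intro x hx
      by_cases h : x ∈ J
      · exact Or.inl ⟨h, hx⟩
      · exact Or.inr ⟨hx.1, h⟩
  have hDisj1 : Disjoint (J ∩ T) A := by
    rw [Set.disjoint_left]
    rintro x ⟨hx, _⟩ hxA
    exact hxA.2 hx
  have e1 : (J ∩ T).ncard + A.ncard = T.ncard := by
    conv_rhs => rw [← hUnion1]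
    rw [
      Set.ncard_union_eq hDisj1 (hTfin.subset Set.inter_subset_right) (hTfin.subset hAT)]
  -- e2
  have hUnion2 : (Kp \ J) ∪ (J ∩ T) = Kp ∩ T := by
    apply Set.Subset.antisymm
    · rintro x (hx | ⟨h1, h2⟩)
      · exact ⟨hx.1, hKpJT hx⟩
      · exact ⟨hJK h1, h2⟩
    · rintro x ⟨h1, h2⟩
      by_cases h : x ∈ J
      · exact Or.inr ⟨h, h2⟩
      · exact Or.inl ⟨h1, h⟩
  have hDisj2 : Disjoint (Kp \ J) (J ∩ T) := by
    rw [Set.disjoint_left]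
    rintro x ⟨_, h2⟩ ⟨h3, _⟩
    exact h2 h3
  have e2 : (Kp \ J).ncard + (J ∩ T).ncard = (Kp ∩ T).ncard := by
    rw [← hUnion2,
      Set.ncard_union_eq hDisj2 (hTfin.subset hKpJT) (hTfin.subset Set.inter_subset_right)]
  -- e3
  have hKT : stdK S F ∩ T = (fun x => F - x) '' B := by
    apply Set.Subset.antisymm
    · rintro y ⟨⟨h1, h2⟩, h3, h4⟩
      exact ⟨F - y, ⟨by omega, h2⟩, by ring⟩
    · rintro y ⟨x, ⟨h1, h2⟩, hxy⟩
      have hxF : x ≤ F := by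
        by_contra h; push_neg at h; exact h2 (hFg _ h)
      have hy : y = F - x := by simpa using hxy.symm
      subst hy
      refine ⟨⟨by omega, ?_⟩, by omega, by omega⟩
      rw [show F - (F - x) = x from by ring]
      exact h2
  have hKTcard : (stdK S F ∩ T).ncard = B.ncard := by
    rw [hKT]
    exact Set.ncard_image_of_injective B (fun a b h => by omega)
  have hUnion3 : Kp ∩ T = (stdK S F ∩ T) ∪ {F} := by
    apply Set.Subset.antisymm
    · rintro x ⟨h1 | h1, h2⟩
      · exact Or.inl ⟨h1, h2⟩
      · exact Or.inr h1
    · rintro x (⟨h1, h2⟩ | h1)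
      · exact ⟨Or.inl h1, h2⟩
      · rw [Set.mem_singleton_iff] at h1
        rw [h1]
        exact ⟨Or.inr rfl, le_of_lt hFpos, le_refl F⟩
  have hDisj3 : Disjoint (stdK S F ∩ T) ({F} : Set ℤ) := by
    rw [Set.disjoint_right]
    rintro y hy ⟨⟨_, h2⟩, _⟩
    rw [Set.mem_singleton_iff] at hy
    apply h2
    rw [hy, show F - F = 0 from by ring]
    exact hS0
  have e3 : (Kp ∩ T).ncard = B.ncard + 1 := by
    rw [hUnion3,
      Set.ncard_union_eq hDisj3 (hTfin.subset Set.inter_subset_right) (Set.finite_singleton F),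
      hKTcard, Set.ncard_singleton]
  -- e4
  have e4 : T.ncard = (F + 1).toNat := by
    rw [hT, ← Finset.coe_Icc, Set.ncard_coe_finset, Int.card_Icc]
    norm_num
  -- e5
  have hUnion5 : (Kp \ L) ∪ (L \ J) = Kp \ J := by
    apply Set.Subset.antisymm
    · rintro x (⟨h1, h2⟩ | ⟨h1, h2⟩)
      · exact ⟨h1, fun h => h2 (hJL h)⟩
      · exact ⟨hLK h1, h2⟩
    · rintro x ⟨h1, h2⟩
      by_cases h : x ∈ L
      · exact Or.inr ⟨h, h2⟩
      · exact Or.inl ⟨h1, h⟩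
  have hDisj5 : Disjoint (Kp \ L) (L \ J) := by
    rw [Set.disjoint_left]
    rintro x ⟨_, h2⟩ ⟨h3, _⟩
    exact h2 h3
  have hKpLsub : Kp \ L ⊆ Kp \ J := fun x hx => ⟨hx.1, fun h => hx.2 (hJL h)⟩
  have hLJsub : L \ J ⊆ Kp \ J := fun x hx => ⟨hLK hx.1, hx.2⟩
  have e5 : (Kp \ L).ncard + (L \ J).ncard = (Kp \ J).ncard := by
    rw [← hUnion5,
      Set.ncard_union_eq hDisj5 (hTfin.subset (hKpLsub.trans hKpJT))
        (hTfin.subset (hLJsub.trans hKpJT))]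
  -- e6 : PF S I has same card as L \ J
  have hsubI : L = (fun x => x + d) '' subI I (maxId S) := by
    apply Set.Subset.antisymm
    · intro x hx
      refine ⟨x - d, ?_, by ring⟩
      intro m hm
      have h2 := hx m hm
      rw [hJmem] at h2
      rw [show x - d + m = x + m - d from by ring]
      exact h2
    · rintro x ⟨y, hy, rfl⟩
      intro m hm
      rw [hJmem, show y + d + m - d = y + m from by ring]
      exact hy m hm
  have hinj : Function.Injective (fun x : ℤ => x + d) := fun a b h => by
    simpa using h
  have hPFeq : L \ J = (fun x => x + d) '' PF S I := by
    rw [hsubI, hJ, PF]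
    exact (Set.image_diff hinj _ _).symm
  have e6 : (PF S I).ncard = (L \ J).ncard := by
    rw [hPFeq]
    exact (Set.ncard_image_of_injective _ (fun a b h => by omega)).symm
  -- finishing arithmetic
  have hF1 : ((F + 1).toNat : ℤ) = F + 1 := Int.toNat_of_nonneg (by omega)
  -- equality with almost canonical
  have hACiff : IsAlmostCanonical S F I ↔ L = Kp := by
    constructor
    · rintro ⟨FI', h1, h2⟩
      have : FI' = FI := frob_unique h1 hFI
      subst this
      exact h2
    · intro h
      exact ⟨FI, hFI, h⟩
  have hKpLzero : (Kp \ L).ncard = 0 ↔ L = Kp := by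
    rw [Set.ncard_eq_zero (hTfin.subset (hKpLsub.trans hKpJT)), Set.diff_eq_empty]
    constructor
    · intro h; exact Set.Subset.antisymm hLK h
    · intro h; rw [h]
  constructor
  · rw [e6]; omega
  · rw [e6, hACiff, ← hKpLzero]
    omega
end

section
/- A relative ideal I of a numerical semigroup S is almost canonical if and only if Ĩ − M = K − M. -/
open Set Pointwise

theorem KsubM_eq (S : Set ℤ) (hS : IsNumSgrp S) (F : ℤ) (hF : IsFrobOf S F) (hFpos : 0 < F) :
    subI (stdK S F) (maxId S) = stdK S F ∪ {F} := by
  obtain ⟨h0, hadd, hpos, c, hc⟩ := hS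
  obtain ⟨hFnot, hFgt⟩ := hF
  ext x
  constructor
  · intro hx
    by_cases hxF : x = F
    · right; exact hxF
    · left
      have hFx : F - x ∉ maxId S := by
        intro hm
        have h1 := (hx _ hm).2
        have : F - (x + (F - x)) = 0 := by ring
        rw [this] at h1
        exact h1 h0
      have hx0 : 0 ≤ x := by
        by_contra h
        exact hFx ⟨hFgt _ (by omega), by simp; omega⟩
      refine ⟨hx0, fun hFxS => hFx ⟨hFxS, ?_⟩⟩
      simp; omega
  · intro hx m hm
    obtain ⟨hmS, hm0⟩ := hm
    have hm0' : (0:ℤ) < m :=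
      lt_of_le_of_ne (hpos m hmS) (Ne.symm (by simpa using hm0))
    rcases hx with hk | hF'
    · refine ⟨by have := hk.1; omega, fun hcon => hk.2 ?_⟩
      have h2 : F - (x + m) + m ∈ S := hadd _ hcon _ hmS
      have : F - (x + m) + m = F - x := by ring
      rwa [this] at h2
    · simp only [Set.mem_singleton_iff] at hF'
      subst hF'
      refine ⟨by omega, fun hcon => ?_⟩
      have := hpos _ hcon
      omega

theorem stmt4 (S : Set ℤ) (hS : IsNumSgrp S) (F : ℤ) (hF : IsFrobOf S F) (hFpos : 0 < F)
    (I : Set ℤ) (hI : IsRelIdeal S I) (FI : ℤ) (hFI : IsFrobOf I FI) :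
    IsAlmostCanonical S F I ↔
      subI (tilde I (F - FI)) (maxId S) = subI (stdK S F) (maxId S) := by
  have hK := KsubM_eq S hS F hF hFpos
  constructor
  · rintro ⟨FI', hFI', heq⟩
    have hEq : FI' = FI := by
      rcases lt_trichotomy FI' FI with h | h | h
      · exact absurd (hFI'.2 FI h) hFI.1
      · exact h
      · exact absurd (hFI.2 FI' h) hFI'.1
    subst hEq
    rw [heq, hK]
  · intro h
    exact ⟨FI, hFI, by rw [h, hK]⟩
end

section
/- A relative ideal I of a numerical semigroup S is almost canonical if and only if K − (M − M) ⊆ Ĩ. -/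
open Set Pointwise

theorem stmt5 (S : Set ℤ) (hS : IsNumSgrp S) (F : ℤ) (hF : IsFrobOf S F) (hFpos : 0 < F)
    (I : Set ℤ) (hI : IsRelIdeal S I) (FI : ℤ) (hFI : IsFrobOf I FI) :
    IsAlmostCanonical S F I ↔
      subI (stdK S F) (subI (maxId S) (maxId S)) ⊆ tilde I (F - FI) := by
  obtain ⟨h0S, haddS, hnonnegS, -⟩ := hS
  have hMpos : ∀ m ∈ maxId S, 0 < m := fun m hm =>
    lt_of_le_of_ne (hnonnegS m hm.1) (fun h => hm.2 h.symm)
  have hFJ : F ∉ tilde I (F - FI) := by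
    rintro ⟨i, hiI, hi⟩
    simp only at hi
    have : i = FI := by omega
    exact hFI.1 (this ▸ hiI)
  have hDM : ∀ x : ℤ, x ∈ stdK S F ∪ {F} ↔ F - x ∉ maxId S := by
    intro x
    constructor
    · rintro (⟨-, h⟩ | h)
      · exact fun h' => h h'.1
      · simp only [Set.mem_singleton_iff] at h
        subst h
        intro h'
        exact h'.2 (by simp)
    · intro h
      by_cases hx : F - x ∈ S
      · right
        have : F - x = 0 := by
          by_contra h0
          exact h ⟨hx, h0⟩
        simp only [Set.mem_singleton_iff]
        omega
      · left
        refine ⟨?_, hx⟩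
        by_contra hneg
        exact hx (hF.2 _ (by omega))
  have hsubJM : ∀ x ∈ subI (tilde I (F - FI)) (maxId S), F - x ∉ maxId S := by
    intro x hx hFx
    have hmem := hx _ hFx
    rw [show x + (F - x) = F by ring] at hmem
    exact hFJ hmem
  constructor
  · rintro ⟨FI', hFI', heq⟩
    have hFIeq : FI' = FI := by
      have h1 : ¬ FI < FI' := fun h => hFI'.1 (hFI.2 _ h)
      have h2 : ¬ FI' < FI := fun h => hFI.1 (hFI'.2 _ h)
      omega
    subst hFIeq
    intro y hy
    have hnot : F - y ∉ subI (maxId S) (maxId S) := by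
      intro hz
      have hy' := hy _ hz
      rw [show y + (F - y) = F by ring] at hy'
      exact hy'.2 (by simpa using h0S)
    simp only [subI, Set.mem_setOf_eq] at hnot
    push_neg at hnot
    obtain ⟨m, hm, hFm⟩ := hnot
    have hx : y - m ∈ stdK S F ∪ {F} := (hDM _).mpr (by
      rw [show F - (y - m) = F - y + m by ring]; exact hFm)
    rw [← heq] at hx
    have hx' := hx m hm
    rwa [show y - m + m = y by ring] at hx'
  · intro hsubK
    refine ⟨FI, hFI, ?_⟩
    ext x
    constructor
    · intro hx
      exact (hDM x).mpr (hsubJM x hx)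
    · intro hx m hm
      apply hsubK
      intro z hz
      have hFx := (hDM x).mp hx
      have hzm : z + m ∈ maxId S := hz m hm
      have hns : F - (x + m + z) ∉ S := by
        intro hs
        apply hFx
        have hsum : F - x = (F - (x + m + z)) + (z + m) := by ring
        constructor
        · rw [hsum]; exact haddS _ hs _ hzm.1
        · have h1 := hnonnegS _ hs
          have h2 := hMpos _ hzm
          simp only [Set.mem_singleton_iff]
          omega
      exact ⟨by by_contra hneg; exact hns (hF.2 _ (by omega)), hns⟩
end

section
/- A relative ideal I of a numerical semigroup S is almost canonical if and only if for every x ∈ PF(I) \ {F(I)} one has F(I) − x ∈ PF(S). -/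
open Set Pointwise

lemma core (S : Set ℤ) (haddS : ∀ a ∈ S, ∀ b ∈ S, a + b ∈ S) (hposS : ∀ a ∈ S, 0 ≤ a)
    (F : ℤ) (hFgt : ∀ z, F < z → z ∈ S)
    (J : Set ℤ) (hJF : F ∉ J) (hJgt : ∀ z, F < z → z ∈ J) :
    subI J (maxId S) = stdK S F ∪ {F} ↔ ∀ y ∈ PF S J \ {F}, F - y ∈ PF S S := by
  have hMmem : ∀ m : ℤ, m ∈ maxId S ↔ m ∈ S ∧ m ≠ 0 := by
    intro m; simp [maxId]
  have hMpos : ∀ m ∈ maxId S, 0 < m := by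
    intro m hm
    rcases (hMmem m).1 hm with ⟨h1, h2⟩
    exact lt_of_le_of_ne (hposS m h1) (Ne.symm h2)
  have hMM : ∀ m ∈ maxId S, ∀ m' ∈ maxId S, m + m' ∈ maxId S := by
    intro m hm m' hm'
    rcases (hMmem m).1 hm with ⟨h1, _⟩
    rcases (hMmem m').1 hm' with ⟨h1', _⟩
    refine (hMmem _).2 ⟨haddS m h1 m' h1', ?_⟩
    have := hMpos m hm; have := hMpos m' hm'; omega
  have hPnn : ∀ u : ℤ, F - u ∉ J → 0 ≤ u := by
    intro u hu
    by_contra h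
    exact hu (hJgt _ (by omega))
  have hsubJ : ∀ z : ℤ, z ∈ subI J (maxId S) ↔ ∀ m ∈ maxId S, z + m ∈ J := fun z => Iff.rfl
  have hsubS : ∀ z : ℤ, z ∈ subI S (maxId S) ↔ ∀ m ∈ maxId S, z + m ∈ S := fun z => Iff.rfl
  have hKmem : ∀ w : ℤ, w ∈ stdK S F ∪ {F} ↔ F - w ∉ maxId S := by
    intro w
    simp only [Set.mem_union, Set.mem_singleton_iff, stdK, Set.mem_setOf_eq, hMmem]
    constructor
    · rintro (⟨-, h⟩ | rfl)
      · exact fun hc => h hc.1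
      · intro hc; exact hc.2 (by ring)
    · intro h
      by_cases hw : F - w = 0
      · right; omega
      · left
        have hns : F - w ∉ S := fun hs => h ⟨hs, hw⟩
        refine ⟨?_, hns⟩
        by_contra hneg
        exact hns (hFgt _ (by omega))
  have key1 : (subI J (maxId S) = stdK S F ∪ {F}) ↔
      (∀ u, F - u ∉ J → ∀ m ∈ maxId S, u + m ∈ S) := by
    rw [Set.ext_iff]
    constructor
    · intro H u hPu m hm
      by_contra hus
      have hM : u + m ∉ maxId S := fun hc => hus hc.1
      have hz : F - (u + m) ∈ stdK S F ∪ {F} := by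
        apply (hKmem _).2
        rw [show F - (F - (u + m)) = u + m by ring]
        exact hM
      have h3 := (hsubJ _).1 ((H (F - (u + m))).2 hz) m hm
      rw [show F - (u + m) + m = F - u by ring] at h3
      exact hPu h3
    · intro G z
      rw [hKmem z, hsubJ z]
      constructor
      · intro h hc
        have := h (F - z) hc
        rw [show z + (F - z) = F by ring] at this
        exact hJF this
      · intro h m hm
        by_contra hzm
        have hP : F - (F - z - m) ∉ J := by
          rw [show F - (F - z - m) = z + m by ring]; exact hzm
        have h4 := G _ hP m hm
        rw [show (F - z - m) + m = F - z by ring] at h4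
        apply h
        refine (hMmem _).2 ⟨h4, ?_⟩
        intro h0
        have := hMpos m hm
        exact hzm (hJgt _ (by omega))
  have key2 : (∀ u, F - u ∉ J → ∀ m ∈ maxId S, u + m ∈ S) ↔
      (∀ u, F - u ∉ J → ¬(∃ m ∈ maxId S, ∃ v, F - v ∉ J ∧ u = v + m) → u ≠ 0 → u ∈ PF S S) := by
    constructor
    · intro G u hPu hQ hu0
      refine ⟨(hsubS u).2 (G u hPu), ?_⟩
      intro huS
      refine hQ ⟨u, (hMmem u).2 ⟨huS, hu0⟩, 0, ?_, by ring⟩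
      rw [show F - 0 = F by ring]; exact hJF
    · intro H
      have main : ∀ n : ℕ, ∀ u : ℤ, F - u ∉ J → u ≤ (n : ℤ) → ∀ m ∈ maxId S, u + m ∈ S := by
        intro n
        induction n using Nat.strong_induction_on with
        | _ n IH =>
          intro u hPu hun m hm
          by_cases hq : ∃ m' ∈ maxId S, ∃ v, F - v ∉ J ∧ u = v + m'
          · obtain ⟨m', hm', v, hPv, rfl⟩ := hq
            have hv0 : 0 ≤ v := hPnn v hPv
            have hm'pos := hMpos m' hm'
            have hlt : v.toNat < n := by omega
            have h5 := IH v.toNat hlt v hPv (by omega) (m' + m) (hMM m' hm' m hm)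
            rw [show v + (m' + m) = v + m' + m by ring] at h5
            exact h5
          · by_cases hu0 : u = 0
            · subst hu0
              rw [zero_add]
              exact ((hMmem m).1 hm).1
            · exact (hsubS u).1 (H u hPu hq hu0).1 m hm
      intro u hPu m hm
      have h0 : 0 ≤ u := hPnn u hPu
      exact main u.toNat u hPu (by omega) m hm
  have key3 : (∀ y ∈ PF S J \ {F}, F - y ∈ PF S S) ↔
      (∀ u, F - u ∉ J → ¬(∃ m ∈ maxId S, ∃ v, F - v ∉ J ∧ u = v + m) → u ≠ 0 → u ∈ PF S S) := by
    constructor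
    · intro H u hPu hQ hu0
      have hmem : F - u ∈ PF S J \ {F} := by
        refine ⟨⟨(hsubJ _).2 ?_, hPu⟩, ?_⟩
        · intro m hm
          by_contra hc
          refine hQ ⟨m, hm, u - m, ?_, by ring⟩
          rw [show F - (u - m) = F - u + m by ring]
          exact hc
        · simp only [Set.mem_singleton_iff]; omega
      have h6 := H _ hmem
      rwa [show F - (F - u) = u by ring] at h6
    · intro H y hy
      rcases hy with ⟨⟨hy1, hy2⟩, hy3⟩
      simp only [Set.mem_singleton_iff] at hy3
      apply H (F - y)
      · rw [show F - (F - y) = y by ring]; exact hy2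
      · rintro ⟨m, hm, v, hv, heq⟩
        apply hv
        have h5 : F - v = y + m := by omega
        rw [h5]
        exact (hsubJ y).1 hy1 m hm
      · omega
  rw [key1, key2, ← key3]

theorem stmt6 (S : Set ℤ) (hS : IsNumSgrp S) (F : ℤ) (hF : IsFrobOf S F) (hFpos : 0 < F)
    (I : Set ℤ) (hI : IsRelIdeal S I) (FI : ℤ) (hFI : IsFrobOf I FI) :
    IsAlmostCanonical S F I ↔
      ∀ x ∈ PF S I \ {FI}, FI - x ∈ PF S S := by
  obtain ⟨h0S, haddS, hposS, -⟩ := hS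
  obtain ⟨hFS, hFgt⟩ := hF
  have hAC : IsAlmostCanonical S F I ↔
      subI (tilde I (F - FI)) (maxId S) = stdK S F ∪ {F} := by
    constructor
    · rintro ⟨FI', hFI', h⟩
      rwa [frob_unique hFI' hFI] at h
    · intro h; exact ⟨FI, hFI, h⟩
  set J := tilde I (F - FI) with hJdef
  have hJmem : ∀ z : ℤ, z ∈ J ↔ z - (F - FI) ∈ I := by
    intro z
    constructor
    · rintro ⟨i, hi, rfl⟩; simpa using hi
    · intro h; exact ⟨z - (F - FI), h, by ring⟩
  have hJF : F ∉ J := by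
    rw [hJmem]
    simpa using hFI.1
  have hJgt : ∀ z, F < z → z ∈ J := by
    intro z hz
    rw [hJmem]
    exact hFI.2 _ (by omega)
  rw [hAC, core S haddS hposS F hFgt J hJF hJgt]
  have htr : ∀ x : ℤ, x ∈ PF S I ↔ x + (F - FI) ∈ PF S J := by
    intro x
    simp only [PF, Set.mem_diff, subI, Set.mem_setOf_eq]
    have e1 : ∀ z : ℤ, (z + (F - FI) ∈ J) ↔ z ∈ I := by
      intro z
      rw [hJmem, show z + (F - FI) - (F - FI) = z by ring]
    constructor
    · rintro ⟨h1, h2⟩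
      refine ⟨fun m hm => ?_, fun hc => h2 ((e1 x).1 hc)⟩
      rw [show x + (F - FI) + m = (x + m) + (F - FI) by ring, e1]
      exact h1 m hm
    · rintro ⟨h1, h2⟩
      refine ⟨fun m hm => ?_, fun hc => h2 ((e1 x).2 hc)⟩
      have h3 := h1 m hm
      rwa [show x + (F - FI) + m = (x + m) + (F - FI) by ring, e1] at h3
  constructor
  · intro H x hx
    rcases hx with ⟨hx1, hx2⟩
    simp only [Set.mem_singleton_iff] at hx2
    have hy : x + (F - FI) ∈ PF S J \ {F} := by
      refine ⟨(htr x).1 hx1, ?_⟩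
      simp only [Set.mem_singleton_iff]; omega
    have h7 := H _ hy
    rwa [show F - (x + (F - FI)) = FI - x by ring] at h7
  · intro H y hy
    rcases hy with ⟨hy1, hy2⟩
    simp only [Set.mem_singleton_iff] at hy2
    have hx : y - (F - FI) ∈ PF S I \ {FI} := by
      refine ⟨?_, ?_⟩
      · rw [htr, show y - (F - FI) + (F - FI) = y by ring]; exact hy1
      · simp only [Set.mem_singleton_iff]; omega
    have h7 := H _ hx
    rwa [show FI - (y - (F - FI)) = F - y by ring] at h7
end

section
/- Let S be a numerical semigroup of type t. If I is an almost canonical relative ideal of S, then t(I) ≤ t + 1. Moreover, for each 1 ≤ i ≤ t + 1 there are exactly C(t, i−1) almost canonical relative ideals of S with Frobenius number F(S) and type i; in particular, there are exactly 2^t almost canonical relative ideals of S with Frobenius number F(S). -/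
open Set Pointwise

section Aux
variable {S : Set ℤ} {F : ℤ}

lemma F_not_K (hS : IsNumSgrp S) : F ∉ stdK S F := fun h => h.2 (by simpa using hS.1)

lemma K_add (hS : IsNumSgrp S) (hF : IsFrobOf S F) :
    maxId S + stdK S F ⊆ stdK S F := by
  rintro x ⟨m, hm, k, hk, rfl⟩
  refine ⟨show (0:ℤ) ≤ m + k by have := hS.2.2.1 m hm.1; linarith [hk.1], fun h => hk.2 ?_⟩
  have h' : F - (m + k) ∈ S := h
  have := hS.2.1 _ h' _ hm.1
  have e : F - (m + k) + m = F - k := by ring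
  rwa [e] at this

lemma Ioi_sub_MK (hS : IsNumSgrp S) (hF : IsFrobOf S F) (hFpos : 0 < F) :
    ∀ z : ℤ, F < z → z ∈ maxId S + stdK S F := by
  intro z hz
  exact ⟨z, ⟨hF.2 z hz, by simp; omega⟩, 0, ⟨le_refl 0, by simpa using hF.1⟩, add_zero z⟩

lemma subIK_sub (hS : IsNumSgrp S) (hF : IsFrobOf S F) :
    subI (stdK S F) (maxId S) ⊆ stdK S F ∪ {F} := by
  intro x hx
  by_contra h
  simp only [Set.mem_union, Set.mem_singleton_iff, not_or] at h
  obtain ⟨hxK, hxF'⟩ := h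
  have hm : F - x ∈ maxId S := by
    by_cases hx0 : 0 ≤ x
    · have : F - x ∈ S := by
        by_contra hc; exact hxK ⟨hx0, hc⟩
      exact ⟨this, by simp; omega⟩
    · exact ⟨hF.2 _ (by omega), by simp; omega⟩
  have := hx _ hm
  have e : x + (F - x) = F := by ring
  rw [e] at this
  exact F_not_K hS this

lemma subI_eq (hS : IsNumSgrp S) (hF : IsFrobOf S F) (hFpos : 0 < F) {I : Set ℤ}
    (h1 : maxId S + stdK S F ⊆ I) (h2 : I ⊆ stdK S F) :
    subI I (maxId S) = stdK S F ∪ {F} := by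
  apply Set.Subset.antisymm
  · intro x hx
    exact subIK_sub hS hF (fun m hm => h2 (hx m hm))
  · rintro x (hx | hx)
    · intro m hm
      exact h1 ⟨m, hm, x, hx, add_comm m x⟩
    · intro m hm
      simp only [Set.mem_singleton_iff] at hx
      subst hx
      have hm0 : 0 < m := by
        rcases hm with ⟨hmS, hm0⟩
        have := hS.2.2.1 m hmS
        simp at hm0; omega
      exact h1 (Ioi_sub_MK hS hF hFpos _ (by omega))

end Aux

section Aux2
variable {S : Set ℤ} {F : ℤ}

lemma tilde_zero (I : Set ℤ) : tilde I 0 = I := by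
  ext x; simp [tilde]

lemma charac (hS : IsNumSgrp S) (hF : IsFrobOf S F) (hFpos : 0 < F) (I : Set ℤ) :
    (IsRelIdeal S I ∧ IsAlmostCanonical S F I ∧ IsFrobOf I F) ↔
    (maxId S + stdK S F ⊆ I ∧ I ⊆ stdK S F) := by
  constructor
  · rintro ⟨hRel, ⟨FI, hFI, hcond⟩, hFrob⟩
    have hFIF : FI = F := by
      rcases lt_trichotomy FI F with h | h | h
      · exact absurd (hFI.2 F h) hFrob.1
      · exact h
      · exact absurd (hFrob.2 FI h) hFI.1
    subst hFIF
    rw [sub_self, tilde_zero] at hcond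
    constructor
    · rintro x ⟨m, hm, k, hk, rfl⟩
      have hk' : k ∈ subI I (maxId S) := by rw [hcond]; exact Or.inl hk
      have := hk' m hm
      show m + k ∈ I
      rwa [add_comm m k]
    · intro x hx
      have hx' : x ∈ subI I (maxId S) := fun m hm => hRel.2.1 x hx m hm.1
      rw [hcond] at hx'
      rcases hx' with h | h
      · exact h
      · simp only [Set.mem_singleton_iff] at h
        subst h
        exact absurd hx hFrob.1
  · rintro ⟨h1, h2⟩
    have hFrob : IsFrobOf I F :=
      ⟨fun h => F_not_K hS (h2 h), fun z hz => h1 (Ioi_sub_MK hS hF hFpos z hz)⟩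
    refine ⟨?_, ⟨F, hFrob, by rw [sub_self, tilde_zero]; exact subI_eq hS hF hFpos h1 h2⟩, hFrob⟩
    refine ⟨⟨F + 1, h1 (Ioi_sub_MK hS hF hFpos _ (by omega))⟩, ?_, ?_⟩
    · intro i hi s hs
      by_cases h0 : s = 0
      · simpa [h0] using hi
      · have : s + i ∈ maxId S + stdK S F := ⟨s, ⟨hs, by simpa using h0⟩, i, h2 hi, rfl⟩
        rw [add_comm s i] at this
        exact h1 this
    · refine ⟨F + 1, hF.2 _ (by omega), fun i hi => hF.2 _ ?_⟩
      have := (h2 hi).1; omega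

lemma PF_gT (hS : IsNumSgrp S) (hF : IsFrobOf S F) (hFpos : 0 < F) {T : Set ℤ}
    (hT : T ⊆ stdK S F \ (maxId S + stdK S F)) :
    PF S (maxId S + stdK S F ∪ T) =
      ((stdK S F \ (maxId S + stdK S F)) \ T) ∪ {F} := by
  have h1 : maxId S + stdK S F ⊆ maxId S + stdK S F ∪ T := Set.subset_union_left
  have h2 : maxId S + stdK S F ∪ T ⊆ stdK S F :=
    Set.union_subset (K_add hS hF) (fun x hx => (hT hx).1)
  have hF1 : F ∉ maxId S + stdK S F ∪ T := fun h => F_not_K hS (h2 h)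
  rw [PF, subI_eq hS hF hFpos h1 h2]
  ext x
  simp only [Set.mem_union, Set.mem_diff, Set.mem_singleton_iff]
  constructor
  · rintro ⟨hK | hxF, hnI⟩
    · exact Or.inl ⟨⟨hK, fun h => hnI (Or.inl h)⟩, fun h => hnI (Or.inr h)⟩
    · exact Or.inr hxF
  · rintro (⟨⟨hK, hnMK⟩, hnT⟩ | rfl)
    · exact ⟨Or.inl hK, by rintro (h | h); exacts [hnMK h, hnT h]⟩
    · exact ⟨Or.inr rfl, hF1⟩

lemma D_eq (hS : IsNumSgrp S) (hF : IsFrobOf S F) (hFpos : 0 < F) :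
    stdK S F \ (maxId S + stdK S F) = (fun f => F - f) '' PF S S := by
  ext x
  constructor
  · rintro ⟨⟨hx0, hxK⟩, hnMK⟩
    refine ⟨F - x, ⟨?_, by simpa using hxK⟩, by ring⟩
    intro m hm
    by_contra hc
    have hle : F - x + m ≤ F := by
      by_contra h
      exact hc (hF.2 _ (by omega))
    refine hnMK ⟨m, hm, x - m, ⟨by omega, ?_⟩, by ring⟩
    intro h
    rw [show F - (x - m) = F - x + m by ring] at h
    exact hc h
  · rintro ⟨f, ⟨hfM, hfS⟩, rfl⟩
    have hfF : f ≤ F := by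
      by_contra h
      exact hfS (hF.2 f (by omega))
    refine ⟨⟨show (0:ℤ) ≤ F - f by omega, show F - (F - f) ∉ S by simpa using hfS⟩, ?_⟩
    rintro ⟨m, hm, k, hk, hx⟩
    have hx' : m + k = F - f := hx
    have : f + m ∈ S := hfM m hm
    have e : f + m = F - k := by omega
    rw [e] at this
    exact hk.2 this

lemma PF_S_finite (hS : IsNumSgrp S) (hF : IsFrobOf S F) (hFpos : 0 < F) : (PF S S).Finite := by
  apply (Set.finite_Ioc 0 F).subset
  rintro f ⟨hfM, hfS⟩
  have hfF : f ≤ F := by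
    by_contra h
    exact hfS (hF.2 f (by omega))
  have hf0 : 0 < f := by
    rcases lt_trichotomy f 0 with h | h | h
    · exfalso
      have hm : F - f ∈ maxId S := ⟨hF.2 _ (by omega), by simp; omega⟩
      have := hfM _ hm
      have e : f + (F - f) = F := by ring
      rw [e] at this
      exact hF.1 this
    · exact absurd (h ▸ hS.1) hfS
    · exact h
  exact ⟨hf0, hfF⟩

end Aux2

section Aux3
variable {S : Set ℤ} {F : ℤ}

lemma mem_tilde {I : Set ℤ} {d x : ℤ} : x ∈ tilde I d ↔ x - d ∈ I := by
  constructor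
  · rintro ⟨a, ha, rfl⟩; simpa using ha
  · intro h; exact ⟨x - d, h, by ring⟩

lemma PF_tilde (S I : Set ℤ) (d : ℤ) : PF S (tilde I d) = (fun x => x + d) '' PF S I := by
  ext x
  simp only [PF, Set.mem_diff, Set.mem_image]
  constructor
  · rintro ⟨h1, h2⟩
    refine ⟨x - d, ⟨⟨fun m hm => ?_, fun h => h2 (mem_tilde.2 h)⟩, by ring⟩⟩
    have := h1 m hm
    rw [mem_tilde] at this
    rw [show x - d + m = x + m - d by ring]
    exact this
  · rintro ⟨a, ⟨⟨ha1, ha2⟩, rfl⟩⟩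
    refine ⟨fun m hm => ?_, fun h => ?_⟩
    · rw [mem_tilde, show a + d + m - d = a + m by ring]; exact ha1 m hm
    · rw [mem_tilde, show a + d - d = a by ring] at h; exact ha2 h

lemma part1 (hS : IsNumSgrp S) (hF : IsFrobOf S F) (hFpos : 0 < F) (I : Set ℤ)
    (hAC : IsAlmostCanonical S F I) :
    (PF S I).ncard ≤ (PF S S).ncard + 1 := by
  obtain ⟨FI, hFI, hcond⟩ := hAC
  set d := F - FI with hd
  set J := tilde I d with hJ
  have hJsub : maxId S + stdK S F ⊆ J := by
    rintro _ ⟨m, hm, k, hk, rfl⟩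
    have hk' : k ∈ subI J (maxId S) := by rw [hcond]; exact Or.inl hk
    have := hk' m hm
    show m + k ∈ J
    rwa [add_comm m k]
  have hPFJ : PF S J = (stdK S F ∪ {F}) \ J := by rw [PF, hcond]
  have hsub : PF S J ⊆ (stdK S F \ (maxId S + stdK S F)) ∪ {F} := by
    rw [hPFJ]
    rintro x ⟨hx1 | hx1, hx2⟩
    · exact Or.inl ⟨hx1, fun h => hx2 (hJsub h)⟩
    · exact Or.inr hx1
  have hDfin : (stdK S F \ (maxId S + stdK S F)).Finite := by
    rw [D_eq hS hF hFpos]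
    exact (PF_S_finite hS hF hFpos).image _
  have hcard : (stdK S F \ (maxId S + stdK S F)).ncard = (PF S S).ncard := by
    rw [D_eq hS hF hFpos]
    exact Set.ncard_image_of_injective _ (fun a b h => by omega)
  have e1 : (PF S I).ncard = (PF S J).ncard := by
    rw [hJ, PF_tilde, Set.ncard_image_of_injective _ (add_left_injective d)]
  rw [e1]
  calc (PF S J).ncard ≤ ((stdK S F \ (maxId S + stdK S F)) ∪ {F}).ncard :=
        Set.ncard_le_ncard hsub (hDfin.union (Set.finite_singleton F))
    _ ≤ (stdK S F \ (maxId S + stdK S F)).ncard + ({F} : Set ℤ).ncard :=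
        Set.ncard_union_le _ _
    _ = (PF S S).ncard + 1 := by rw [hcard, Set.ncard_singleton]

lemma bridge (D : Set ℤ) (hD : D.Finite) (p : Set ℤ → Prop)
    [DecidablePred fun t : Finset ℤ => p ↑t] :
    {T : Set ℤ | T ⊆ D ∧ p T}.ncard =
      (hD.toFinset.powerset.filter (fun t : Finset ℤ => p ↑t)).card := by
  have himg : {T : Set ℤ | T ⊆ D ∧ p T} =
      (fun t : Finset ℤ => (t : Set ℤ)) ''
        ((hD.toFinset.powerset.filter (fun t : Finset ℤ => p ↑t) : Finset (Finset ℤ)) :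
          Set (Finset ℤ)) := by
    ext T
    constructor
    · rintro ⟨hTD, hpT⟩
      have hTfin : T.Finite := hD.subset hTD
      refine ⟨hTfin.toFinset, ?_, by simp⟩
      simp only [Finset.mem_coe, Finset.mem_filter, Finset.mem_powerset]
      exact ⟨by rw [Set.Finite.toFinset_subset_toFinset]; exact hTD, by simp [hpT]⟩
    · rintro ⟨t, ht, rfl⟩
      simp only [Finset.mem_coe, Finset.mem_filter, Finset.mem_powerset] at ht
      refine ⟨fun x hx => ?_, ht.2⟩
      have := ht.1 hx
      rwa [Set.Finite.mem_toFinset] at this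
  rw [himg, Set.ncard_image_of_injective _ Finset.coe_injective, Set.ncard_coe_finset]

end Aux3

theorem stmt7 (S : Set ℤ) (hS : IsNumSgrp S) (F : ℤ) (hF : IsFrobOf S F) (hFpos : 0 < F) :
    (∀ I : Set ℤ, IsRelIdeal S I → IsAlmostCanonical S F I →
        (PF S I).ncard ≤ (PF S S).ncard + 1) ∧
    (∀ i : ℕ, 1 ≤ i → i ≤ (PF S S).ncard + 1 →
        {I : Set ℤ | IsRelIdeal S I ∧ IsAlmostCanonical S F I ∧ IsFrobOf I F ∧
          (PF S I).ncard = i}.ncard = Nat.choose (PF S S).ncard (i - 1)) ∧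
    {I : Set ℤ | IsRelIdeal S I ∧ IsAlmostCanonical S F I ∧ IsFrobOf I F}.ncard =
      2 ^ (PF S S).ncard := by
  classical
  set D : Set ℤ := stdK S F \ (maxId S + stdK S F) with hD
  have hPFfin := PF_S_finite hS hF hFpos
  have hDfin : D.Finite := by
    rw [hD, D_eq hS hF hFpos]; exact hPFfin.image _
  have hDcard : D.ncard = (PF S S).ncard := by
    rw [hD, D_eq hS hF hFpos]
    exact Set.ncard_image_of_injective _ (fun a b h => by omega)
  have hginj : Set.InjOn (fun T => maxId S + stdK S F ∪ T) {T : Set ℤ | T ⊆ D} := by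
    have key : ∀ T ⊆ D, ∀ T' ⊆ D,
        maxId S + stdK S F ∪ T = maxId S + stdK S F ∪ T' → T ⊆ T' := by
      intro T hT T' hT' hEq x hx
      have hx' : x ∈ maxId S + stdK S F ∪ T' := hEq ▸ (Or.inr hx)
      rcases hx' with h | h
      · exact absurd h (hT hx).2
      · exact h
    intro T hT T' hT' hEq
    exact Set.Subset.antisymm (key T hT T' hT' hEq) (key T' hT' T hT hEq.symm)
  have hdecomp : ∀ I : Set ℤ, maxId S + stdK S F ⊆ I → I ⊆ stdK S F →
      maxId S + stdK S F ∪ (I ∩ D) = I := by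
    intro I h1 h2
    apply Set.Subset.antisymm
    · exact Set.union_subset h1 Set.inter_subset_left
    · intro x hx
      by_cases hxM : x ∈ maxId S + stdK S F
      · exact Or.inl hxM
      · exact Or.inr ⟨hx, h2 hx, hxM⟩
  have hgmem : ∀ T ⊆ D, maxId S + stdK S F ⊆ maxId S + stdK S F ∪ T ∧
      maxId S + stdK S F ∪ T ⊆ stdK S F := fun T hT =>
    ⟨Set.subset_union_left,
      Set.union_subset (K_add hS hF) (fun x hx => (hT hx).1)⟩
  have hPFcount : ∀ T ⊆ D, (PF S (maxId S + stdK S F ∪ T)).ncard + T.ncard =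
      D.ncard + 1 := by
    intro T hT
    rw [PF_gT hS hF hFpos hT]
    have hFD : F ∉ D \ T := fun h => F_not_K hS h.1.1
    rw [Set.union_singleton, Set.ncard_insert_of_notMem hFD (hDfin.diff (t := T))]
    have := Set.ncard_diff_add_ncard_of_subset hT hDfin
    omega
  refine ⟨fun I _ hAC => part1 hS hF hFpos I hAC, ?_, ?_⟩
  · -- part 2
    intro i h1i h2i
    rw [← hDcard] at h2i ⊢
    have hset2 : {I : Set ℤ | IsRelIdeal S I ∧ IsAlmostCanonical S F I ∧ IsFrobOf I F ∧
          (PF S I).ncard = i} =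
        (fun T => maxId S + stdK S F ∪ T) ''
          {T : Set ℤ | T ⊆ D ∧ T.ncard = D.ncard + 1 - i} := by
      ext I
      simp only [Set.mem_setOf_eq, Set.mem_image]
      constructor
      · rintro ⟨hRel, hAC, hFrob, hcardI⟩
        obtain ⟨h1, h2⟩ := (charac hS hF hFpos I).1 ⟨hRel, hAC, hFrob⟩
        have hsubD : I ∩ D ⊆ D := Set.inter_subset_right
        have hcnt := hPFcount (I ∩ D) hsubD
        rw [hdecomp I h1 h2] at hcnt
        have hle : (I ∩ D).ncard ≤ D.ncard := Set.ncard_le_ncard hsubD hDfin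
        exact ⟨I ∩ D, ⟨hsubD, by omega⟩, hdecomp I h1 h2⟩
      · rintro ⟨T, ⟨hTD, hTcard⟩, rfl⟩
        obtain ⟨hRel, hAC, hFrob⟩ := (charac hS hF hFpos _).2 (hgmem T hTD)
        have hcnt := hPFcount T hTD
        have hle : T.ncard ≤ D.ncard := Set.ncard_le_ncard hTD hDfin
        exact ⟨hRel, hAC, hFrob, by omega⟩
    rw [hset2, Set.ncard_image_of_injOn (hginj.mono (fun T hT => hT.1)),
      bridge D hDfin (fun T => T.ncard = D.ncard + 1 - i)]
    have hfe : hDfin.toFinset.powerset.filter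
          (fun t : Finset ℤ => (↑t : Set ℤ).ncard = D.ncard + 1 - i) =
        hDfin.toFinset.powersetCard (D.ncard + 1 - i) := by
      rw [Finset.powersetCard_eq_filter]
      apply Finset.filter_congr
      intro t _
      simp [Set.ncard_coe_finset]
    rw [hfe, Finset.card_powersetCard, ← Set.ncard_eq_toFinset_card D hDfin,
      show D.ncard + 1 - i = D.ncard - (i - 1) by omega,
      Nat.choose_symm (by omega : i - 1 ≤ D.ncard)]
  · -- part 3
    rw [← hDcard]
    have hset3 : {I : Set ℤ | IsRelIdeal S I ∧ IsAlmostCanonical S F I ∧ IsFrobOf I F} =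
        (fun T => maxId S + stdK S F ∪ T) '' {T : Set ℤ | T ⊆ D ∧ True} := by
      ext I
      simp only [Set.mem_setOf_eq, Set.mem_image, and_true]
      constructor
      · intro h
        obtain ⟨h1, h2⟩ := (charac hS hF hFpos I).1 h
        exact ⟨I ∩ D, Set.inter_subset_right, hdecomp I h1 h2⟩
      · rintro ⟨T, hTD, rfl⟩
        exact (charac hS hF hFpos _).2 (hgmem T hTD)
    rw [hset3, Set.ncard_image_of_injOn (hginj.mono (fun T hT => hT.1)),
      bridge D hDfin (fun _ => True), Finset.filter_true, Finset.card_powerset,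
      ← Set.ncard_eq_toFinset_card D hDfin]
end

section
/- If S is a GAS numerical semigroup with maximal embedding dimension e, then S is either almost symmetric, or 2-AGL with 2K \ K = {F(S) − e, F(S)}. -/
open Set Pointwise

section Aux

lemma numsgrp_not_mem_of_neg {S : Set ℤ} (hS : IsNumSgrp S) {z : ℤ} (hz : z < 0) : z ∉ S :=
  fun h => absurd (hS.2.2.1 z h) (by omega)

lemma mult_le {S : Set ℤ} {e : ℤ} (he : IsMult S e) {m : ℤ} (hm : m ∈ S) (hm0 : m ≠ 0) :
    e ≤ m := he.2 m ⟨hm, by simpa using hm0⟩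

lemma mult_pos {S : Set ℤ} (hS : IsNumSgrp S) {e : ℤ} (he : IsMult S e) : 0 < e := by
  have h1 : e ∈ S := he.1.1
  have h2 : e ≠ 0 := by simpa using he.1.2
  have := hS.2.2.1 e h1
  omega

lemma add_nsmul_mem {S : Set ℤ} (hS : IsNumSgrp S) {e : ℤ} (heS : e ∈ S) :
    ∀ (n : ℕ), ∀ a ∈ S, a + n * e ∈ S := by
  intro n
  induction n with
  | zero => simpa
  | succ n ih =>
      intro a ha
      have h := hS.2.1 _ (ih a ha) _ heS
      have : a + (n + 1 : ℕ) * e = a + n * e + e := by push_cast; ring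
      rwa [this]

lemma apery_finite_card {S : Set ℤ} (hS : IsNumSgrp S) {e : ℤ} (heS : e ∈ S) (he0 : 0 < e) :
    (apery S e).Finite ∧ (apery S e).ncard ≤ e.toNat := by
  have hinj : Set.InjOn (· % e) (apery S e) := by
    have key : ∀ a b : ℤ, a ∈ apery S e → b ∈ apery S e → a ≤ b → a % e = b % e → a = b := by
      intro a b ha hb hab hmod
      have hdvd : e ∣ b - a := Int.ModEq.dvd hmod
      obtain ⟨t, ht⟩ := hdvd
      have ht0 : 0 ≤ t := by
        rcases le_or_gt 0 t with h | h
        · exact h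
        · exfalso; have := mul_neg_of_pos_of_neg he0 h; omega
      rcases eq_or_lt_of_le ht0 with h | h
      · have : e * t = 0 := by rw [← h, mul_zero]
        omega
      · exfalso
        have hmem : a + ((t - 1).toNat : ℤ) * e ∈ S := add_nsmul_mem hS heS _ a ha.1
        have heq : b - e = a + ((t - 1).toNat : ℤ) * e := by
          have : ((t - 1).toNat : ℤ) = t - 1 := by omega
          rw [this]; nlinarith [ht]
        exact hb.2 (heq ▸ hmem)
    intro a ha b hb hmod
    rcases le_total a b with h | h
    · exact key a b ha hb h hmod
    · exact (key b a hb ha h hmod.symm).symm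
  have himg : (· % e) '' (apery S e) ⊆ Set.Ico 0 e := by
    rintro _ ⟨a, _, rfl⟩
    exact ⟨Int.emod_nonneg a (by omega), Int.emod_lt_of_pos a he0⟩
  have hIcofin : (Set.Ico (0:ℤ) e).Finite := Set.finite_Ico 0 e
  have hfin : (apery S e).Finite :=
    Set.Finite.of_finite_image (hIcofin.subset himg) hinj
  refine ⟨hfin, ?_⟩
  calc (apery S e).ncard = ((· % e) '' (apery S e)).ncard := (Set.ncard_image_of_injOn hinj).symm
    _ ≤ (Set.Ico (0:ℤ) e).ncard := Set.ncard_le_ncard himg hIcofin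
    _ = e.toNat := by
        rw [← Finset.coe_Ico, Set.ncard_coe_finset, Int.card_Ico]; omega

lemma med_lemma (S : Set ℤ) (hS : IsNumSgrp S) (F e : ℤ) (hF : IsFrobOf S F) (he : IsMult S e)
    (hmed : ({x : ℤ | IsMinGen S x}.ncard : ℤ) = e) :
    ∀ m₁ ∈ maxId S, ∀ m₂ ∈ maxId S, m₁ + m₂ - e ∈ S := by
  have he0 : 0 < e := mult_pos hS he
  have heS : e ∈ S := he.1.1
  obtain ⟨hApfin, hApcard⟩ := apery_finite_card hS heS he0
  have h0Ap : (0:ℤ) ∈ apery S e :=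
    ⟨hS.1, numsgrp_not_mem_of_neg hS (by omega)⟩
  have heAp : e ∉ apery S e := fun h => h.2 (by simpa using hS.1)
  set B : Set ℤ := insert e (apery S e \ {0}) with hB
  have hBfin : B.Finite := (hApfin.diff (t := {0})).insert e
  have hsub : {x : ℤ | IsMinGen S x} ⊆ B := by
    intro x hx
    have hxM : x ∈ maxId S := hx.1
    by_cases hxe : x = e
    · exact hxe ▸ Set.mem_insert e _
    · refine Set.mem_insert_of_mem _ ⟨⟨hxM.1, ?_⟩, by simpa using hxM.2⟩
      intro hcon
      have hxle : e ≤ x := mult_le he hxM.1 (by simpa using hxM.2)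
      have hxm : x - e ∈ maxId S := ⟨hcon, by simp; omega⟩
      have : x ∈ maxId S + maxId S := by
        have := Set.add_mem_add hxm he.1
        simpa using this
      exact hx.2 this
  have hBcard : B.ncard ≤ e.toNat := by
    have h1 : (apery S e \ {0}).ncard = (apery S e).ncard - 1 :=
      Set.ncard_diff_singleton_of_mem h0Ap
    have h2 : e ∉ apery S e \ {0} := fun h => heAp h.1
    have h3 : B.ncard = (apery S e \ {0}).ncard + 1 :=
      Set.ncard_insert_of_notMem h2 (hApfin.diff (t := {0}))
    have h4 : 0 < (apery S e).ncard := (Set.ncard_pos hApfin).mpr ⟨0, h0Ap⟩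
    omega
  have hmg : ({x : ℤ | IsMinGen S x}).ncard = e.toNat := by omega
  have heq : {x : ℤ | IsMinGen S x} = B :=
    Set.eq_of_subset_of_ncard_le hsub (by omega) hBfin
  intro m₁ hm₁ m₂ hm₂
  by_contra hcon
  have hm₁e : e ≤ m₁ := mult_le he hm₁.1 (by simpa using hm₁.2)
  have hm₂e : e ≤ m₂ := mult_le he hm₂.1 (by simpa using hm₂.2)
  have hmemB : m₁ + m₂ ∈ B := by
    refine Set.mem_insert_of_mem _ ⟨⟨hS.2.1 _ hm₁.1 _ hm₂.1, hcon⟩, by simp; omega⟩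
  have hmg' : m₁ + m₂ ∈ {x : ℤ | IsMinGen S x} := by rw [heq]; exact hmemB
  exact hmg'.2 (Set.add_mem_add hm₁ hm₂)

lemma mingen_sub_mult_mem_PF (S : Set ℤ) (hS : IsNumSgrp S) (F e : ℤ) (hF : IsFrobOf S F)
    (he : IsMult S e) (hmed : ({x : ℤ | IsMinGen S x}.ncard : ℤ) = e)
    {x : ℤ} (hx : IsMinGen S x) (hxe : x ≠ e) : x - e ∈ PF S S := by
  have hxM : x ∈ maxId S := hx.1
  have hex : e ≤ x := mult_le he hxM.1 (by simpa using hxM.2)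
  constructor
  · intro j hj
    have h := med_lemma S hS F e hF he hmed x hxM j hj
    rwa [show x - e + j = x + j - e by ring]
  · intro hcon
    have hxm : x - e ∈ maxId S := ⟨hcon, by simp; omega⟩
    have : x ∈ maxId S + maxId S := by
      have := Set.add_mem_add hxm he.1
      simpa using this
    exact hx.2 this

end Aux



theorem stmt9 (S : Set ℤ) (hS : IsNumSgrp S) (F e : ℤ) (hF : IsFrobOf S F) (he : IsMult S e)
    (hmed : ({x : ℤ | IsMinGen S x}.ncard : ℤ) = e) (hgas : IsGAS S F) :
    (stdK S F + stdK S F) \ stdK S F ⊆ {F} ∨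
    ((genK S F \ stdK S F).ncard = 2 ∧
      (stdK S F + stdK S F) \ stdK S F = {F - e, F}) := by
  rcases hgas with h | ⟨X, hXgen, hXpf, hX2K⟩
  · left; rw [h]; simp
  rcases X.eq_empty_or_nonempty with rfl | ⟨x₀, hx₀X⟩
  · left; rw [hX2K]; simp
  have he0 : 0 < e := mult_pos hS he
  have heS : e ∈ S := he.1.1
  have hg0 : IsMinGen S x₀ := hXgen x₀ hx₀X
  have hx₀M : x₀ ∈ maxId S := hg0.1
  have hex₀ : e ≤ x₀ := mult_le he hx₀M.1 (by simpa using hx₀M.2)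
  have hFx₀ : F - x₀ ∈ (stdK S F + stdK S F) \ stdK S F := by
    rw [hX2K]
    exact Or.inl ⟨x₀, by simpa using hx₀X, rfl⟩
  obtain ⟨k₁, hk₁, k₂, hk₂, hk12⟩ := Set.mem_add.mp hFx₀.1
  have hk₁' : 0 ≤ k₁ ∧ F - k₁ ∉ S := hk₁
  have hk₂' : 0 ≤ k₂ ∧ F - k₂ ∉ S := hk₂
  have hx₀F : x₀ ≤ F := by omega
  have heF : e ≤ F := by omega
  -- K basics
  have hKmem : ∀ z : ℤ, z ∈ stdK S F ↔ 0 ≤ z ∧ F - z ∉ S := fun z => Iff.rfl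
  have hFeK : F - e ∉ stdK S F := by
    intro h
    exact h.2 (by simpa using heS)
  -- e ∈ X
  have heX : e ∈ X := by
    by_cases hx₀e : x₀ = e
    · rwa [hx₀e] at hx₀X
    have hPF : x₀ - e ∈ PF S S := mingen_sub_mult_mem_PF S hS F e hF he hmed hg0 hx₀e
    have hsnot : e + k₁ ∉ S := by
      intro hs
      have hsM : e + k₁ ∈ maxId S := ⟨hs, by simp; omega⟩
      have h1 : x₀ - e + (e + k₁) ∈ S := hPF.1 _ hsM
      have h2 : x₀ - e + (e + k₁) = F - k₂ := by omega
      exact hk₂'.2 (h2 ▸ h1)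
    have hFe2K : F - e ∈ stdK S F + stdK S F := by
      refine Set.mem_add.mpr ⟨k₁, hk₁, F - e - k₁, ⟨by omega, ?_⟩, by ring⟩
      rwa [show F - (F - e - k₁) = e + k₁ by ring]
    have : F - e ∈ (fun x => F - x) '' (X : Set ℤ) ∪ {F} := by
      rw [← hX2K]; exact ⟨hFe2K, hFeK⟩
    rcases this with ⟨x', hx'X, hx'eq⟩ | h
    · have hx'eq' : F - x' = F - e := hx'eq
      have hx'e : x' = e := by omega
      rw [← hx'e]
      exact_mod_cast hx'X
    · exfalso; simp at h; omega
  -- X = {e}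
  have hXeq : X = {e} := by
    refine Finset.eq_singleton_iff_unique_mem.mpr ⟨heX, fun x hx => ?_⟩
    by_contra hne
    exact hXpf x hx e heX (mingen_sub_mult_mem_PF S hS F e hF he hmed (hXgen x hx) hne)
  have h2KK : (stdK S F + stdK S F) \ stdK S F = {F - e, F} := by
    rw [hX2K, hXeq]
    simp only [Finset.coe_singleton, Set.image_singleton, Set.singleton_union]
  right
  refine ⟨?_, h2KK⟩
  -- the genK part
  have hF2K : F ∈ (stdK S F + stdK S F) \ stdK S F := by
    rw [h2KK]; right; rfl
  have hFe2K : F - e ∈ (stdK S F + stdK S F) \ stdK S F := by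
    rw [h2KK]; left; rfl
  have hFe0 : 0 ≤ F - e := by omega
  have hadd3 : ∀ z ∈ stdK S F ∪ (stdK S F + stdK S F), ∀ k ∈ stdK S F,
      z + k ∈ stdK S F ∪ (stdK S F + stdK S F) := by
    rintro z (hz | hz) k hk
    · right; exact Set.add_mem_add hz hk
    · by_cases hzK : z ∈ stdK S F
      · right; exact Set.add_mem_add hzK hk
      · have hz2 : z ∈ ({F - e, F} : Set ℤ) := by
          rw [← h2KK]; exact ⟨hz, hzK⟩
        have hk0 : 0 ≤ k := hk.1
        rcases hz2 with hz' | hz'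
        · -- z = F - e
          rw [hz']
          by_cases h0 : k = 0
          · subst h0
            right; simpa using hFe2K.1
          by_cases hke : k = e
          · rw [hke, show F - e + e = F by ring]
            right; exact hF2K.1
          · left
            refine ⟨by omega, ?_⟩
            rw [show F - (F - e + k) = e - k by ring]
            intro hcon
            have h1 := hS.2.2.1 _ hcon
            have h2 := mult_le he hcon (by omega)
            omega
        · -- z = F
          simp only [Set.mem_singleton_iff] at hz'
          rw [hz']
          by_cases h0 : k = 0
          · subst h0
            right; simpa using hF2K.1
          · left
            refine ⟨by omega, ?_⟩
            rw [show F - (F + k) = -k by ring]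
            exact numsgrp_not_mem_of_neg hS (by omega)
  have h0K : (0:ℤ) ∈ stdK S F := ⟨le_refl 0, by simpa using hF.1⟩
  set T : AddSubmonoid ℤ :=
    { carrier := stdK S F ∪ (stdK S F + stdK S F)
      zero_mem' := Or.inl h0K
      add_mem' := by
        intro a b ha hb
        rcases hb with hb | hb
        · exact hadd3 a ha b hb
        · obtain ⟨c, hc, d, hd, hcd⟩ := Set.mem_add.mp hb
          have h1 := hadd3 a ha c hc
          have h2 := hadd3 _ h1 d hd
          rwa [show a + c + d = a + b by omega] at h2 } with hT
  have hclos : genK S F ⊆ stdK S F ∪ (stdK S F + stdK S F) := by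
    intro x hx
    have hle : AddSubmonoid.closure (stdK S F) ≤ T :=
      AddSubmonoid.closure_le.mpr (fun y hy => Or.inl hy)
    exact hle hx
  have h2Kclos : stdK S F + stdK S F ⊆ genK S F := by
    rintro x hx
    obtain ⟨a, ha, b, hb, hab⟩ := Set.mem_add.mp hx
    have : a + b ∈ AddSubmonoid.closure (stdK S F) :=
      AddSubmonoid.add_mem _ (AddSubmonoid.subset_closure ha) (AddSubmonoid.subset_closure hb)
    rw [← hab]
    exact this
  have hgenKeq : genK S F \ stdK S F = {F - e, F} := by
    apply Set.Subset.antisymm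
    · rintro x ⟨hx, hxK⟩
      rcases hclos hx with h | h
      · exact absurd h hxK
      · rw [← h2KK]; exact ⟨h, hxK⟩
    · rintro x (hx | hx)
      · subst hx
        exact ⟨h2Kclos hFe2K.1, hFe2K.2⟩
      · simp only [Set.mem_singleton_iff] at hx
        subst hx
        exact ⟨h2Kclos hF2K.1, hF2K.2⟩
  rw [hgenKeq]
  exact Set.ncard_pair (by omega)
end

section
/- A numerical semigroup S is GAS if and only if x − y ∉ M − M for all distinct x, y ∈ M \ (S − K). -/
open Set Pointwise

theorem stmt10 (S : Set ℤ) (hS : IsNumSgrp S) (F : ℤ) (hF : IsFrobOf S F) :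
    IsGAS S F ↔ ∀ x ∈ maxId S \ subI S (stdK S F), ∀ y ∈ maxId S \ subI S (stdK S F),
      x ≠ y → x - y ∉ subI (maxId S) (maxId S) := by
  obtain ⟨h0, hadd, hnn, -⟩ := hS
  obtain ⟨hFS, hFup⟩ := hF
  have hnotS_le : ∀ z, z ∉ S → z ≤ F := by
    intro z hz; by_contra h; exact hz (hFup z (by omega))
  have hmemK : ∀ x, x ∈ stdK S F ↔ F - x ∉ S := by
    intro x
    constructor
    · exact fun h => h.2
    · intro h
      have := hnotS_le _ h
      exact ⟨by omega, h⟩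
  have hmemM : ∀ x, x ∈ maxId S ↔ x ∈ S ∧ x ≠ 0 := by
    intro x; simp [maxId]
  -- elements of M are in M - M
  have hM_MM : ∀ b ∈ maxId S, b ∈ subI (maxId S) (maxId S) := by
    intro b hb m hm
    rw [hmemM] at hb hm ⊢
    have h1 := hnn b hb.1
    have h2 := hnn m hm.1
    exact ⟨hadd b hb.1 m hm.1, by omega⟩
  -- x in T implies F - x in 2K \ K
  have hT2K : ∀ x ∈ maxId S \ subI S (stdK S F),
      F - x ∈ (stdK S F + stdK S F) \ stdK S F := by
    rintro x ⟨hxM, hxK⟩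
    rw [hmemM] at hxM
    simp only [subI, Set.mem_setOf_eq, not_forall] at hxK
    obtain ⟨k, hk, hxk⟩ := hxK
    constructor
    · rw [Set.mem_add]
      refine ⟨k, hk, F - x - k, ?_, by ring⟩
      rw [hmemK]
      have : F - (F - x - k) = x + k := by ring
      rw [this]; exact hxk
    · rw [hmemK]
      have : F - (F - x) = x := by ring
      rw [this]
      simp [hxM.1]
  constructor
  · rintro (h2K | ⟨X, hXgen, hXpf, hXeq⟩) x hx y hy hxy hdiff
    · have := hT2K x hx
      rw [h2K] at this
      exact this.2 this.1
    · -- x and y belong to X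
      have hmemX : ∀ z ∈ maxId S \ subI S (stdK S F), z ∈ X := by
        intro z hz
        have h2 := hT2K z hz
        rw [hXeq] at h2
        rcases h2 with h2 | h2
        · obtain ⟨z', hz', hEq⟩ := h2
          have hEq' : F - z' = F - z := hEq
          have : z' = z := by omega
          rwa [← this]
        · simp only [Set.mem_singleton_iff] at h2
          have hz0 : z ≠ 0 := ((hmemM z).1 hz.1).2
          omega
      have hxX := hmemX x hx
      have hyX := hmemX y hy
      -- x - y ∈ S
      have hxyS : x - y ∈ S := by
        by_contra hns
        refine hXpf x hxX y hyX ⟨?_, hns⟩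
        intro m hm
        exact ((hmemM _).1 (hdiff m hm)).1
      have hxypos : 0 < x - y := by
        have := hnn _ hxyS
        omega
      -- contradiction with x being a minimal generator
      have hgen := hXgen x hxX
      refine hgen.2 ?_
      rw [Set.mem_add]
      refine ⟨x - y, ?_, y, hy.1, by ring⟩
      rw [hmemM]
      exact ⟨hxyS, by omega⟩
  · intro h
    by_cases hsym : 0 ∈ subI S (stdK S F)
    · left
      ext z
      constructor
      · rw [Set.mem_add]
        rintro ⟨a, ha, b, hb, rfl⟩
        have haS : a ∈ S := by
          have := hsym a ha
          simpa using this
        rw [hmemK]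
        intro hcon
        have : F - b = a + (F - (a + b)) := by ring
        exact ((hmemK b).1 hb) (this ▸ hadd a haS _ hcon)
      · intro hz
        rw [Set.mem_add]
        exact ⟨0, (hmemK 0).2 (by simpa using hFS), z, hz, by ring⟩
    · right
      have hTfin : (maxId S \ subI S (stdK S F)).Finite := by
        apply Set.Finite.subset (Set.finite_Icc 1 F)
        rintro x ⟨hxM, hxK⟩
        rw [hmemM] at hxM
        simp only [subI, Set.mem_setOf_eq, not_forall] at hxK
        obtain ⟨k, hk, hxk⟩ := hxK
        have h1 := hnn x hxM.1
        have h2 := hk.1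
        have h3 := hnotS_le _ hxk
        simp only [Set.mem_Icc]
        omega
      refine ⟨hTfin.toFinset, ?_, ?_, ?_⟩
      · -- minimal generators
        intro x hx
        rw [Set.Finite.mem_toFinset] at hx
        refine ⟨hx.1, ?_⟩
        rw [Set.mem_add]
        rintro ⟨a, ha, b, hb, hab⟩
        have hxM := hx.1
        have hxK := hx.2
        simp only [subI, Set.mem_setOf_eq, not_forall] at hxK
        obtain ⟨k, hk, hxk⟩ := hxK
        rw [hmemM] at ha hb
        have haT : a ∈ maxId S \ subI S (stdK S F) := by
          refine ⟨(hmemM a).2 ha, ?_⟩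
          simp only [subI, Set.mem_setOf_eq, not_forall]
          refine ⟨k, hk, fun hcon => hxk ?_⟩
          have : x + k = (a + k) + b := by omega
          rw [this]
          exact hadd _ hcon b hb.1
        have hbpos : 0 < b := by
          have := hnn b hb.1
          have := hb.2
          omega
        have hne : x ≠ a := by omega
        have := h x hx a haT hne
        refine this ?_
        have : x - a = b := by omega
        rw [this]
        exact hM_MM b ((hmemM b).2 hb)
      · -- pairwise differences not in PF
        intro x hx y hy
        rw [Set.Finite.mem_toFinset] at hx hy
        rintro ⟨hpf1, hpf2⟩
        by_cases hxy : x = y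
        · subst hxy
          simp only [sub_self] at hpf2
          exact hpf2 h0
        · have hnMM := h x hx y hy hxy
          simp only [subI, Set.mem_setOf_eq, not_forall] at hnMM
          obtain ⟨m, hm, hxym⟩ := hnMM
          have hS' := hpf1 m hm
          rw [hmemM] at hxym
          have hzero : x - y + m = 0 := by
            by_contra hc
            exact hxym ⟨hS', hc⟩
          -- then y - x = m ∈ M ⊆ M - M, contradicting h y x
          have hyx : y - x = m := by omega
          refine h y hy x hx (Ne.symm hxy) ?_
          rw [hyx]
          exact hM_MM m hm
      · -- the set equality
        ext z
        simp only [Set.Finite.coe_toFinset]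
        constructor
        · rintro ⟨hz2, hzK⟩
          rw [Set.mem_add] at hz2
          obtain ⟨a, ha, b, hb, hab⟩ := hz2
          rw [hmemK, not_not] at hzK
          by_cases hz0 : F - z = 0
          · right; simp only [Set.mem_singleton_iff]; omega
          · left
            refine ⟨F - z, ⟨(hmemM _).2 ⟨hzK, hz0⟩, ?_⟩, by ring⟩
            simp only [subI, Set.mem_setOf_eq, not_forall]
            refine ⟨a, ha, ?_⟩
            have : F - z + a = F - b := by omega
            rw [this]
            exact (hmemK b).1 hb
        · rintro (⟨x, hx, rfl⟩ | hz)
          · exact hT2K x hx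
          · simp only [Set.mem_singleton_iff] at hz
            rw [hz]
            simp only [subI, Set.mem_setOf_eq, not_forall] at hsym
            obtain ⟨k, hk, hkS⟩ := hsym
            simp only [zero_add] at hkS
            constructor
            · rw [Set.mem_add]
              refine ⟨k, hk, F - k, ?_, by ring⟩
              rw [hmemK]
              have : F - (F - k) = k := by ring
              rw [this]; exact hkS
            · rw [hmemK]
              simpa using h0
end

section
/- A numerical semigroup S is GAS if and only if either S is symmetric, or 2M ⊆ S − K ⊆ M and M − M = ((S − K) − M) ∪ {0}. -/
open Set Pointwise

section AuxGAS

variable {S : Set ℤ} {F : ℤ}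

private lemma mem_maxId {x : ℤ} : x ∈ maxId S ↔ x ∈ S ∧ x ≠ 0 := by
  simp [maxId]

private lemma one_le_M (hS : IsNumSgrp S) {m : ℤ} (hm : m ∈ maxId S) : 1 ≤ m := by
  have h1 := hS.2.2.1 m hm.1
  have h2 := (mem_maxId.mp hm).2
  omega

private lemma S_sub_K (hS : IsNumSgrp S) (hF : IsFrobOf S F) : S ⊆ stdK S F := by
  intro s hs
  refine ⟨hS.2.2.1 s hs, fun h => hF.1 ?_⟩
  have := hS.2.1 _ h _ hs
  rw [show F - s + s = F by ring] at this
  exact this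

private lemma dualK (hS : IsNumSgrp S) (hF : IsFrobOf S F)
    {I : Set ℤ} (hI : ∀ i ∈ I, ∀ s ∈ S, i + s ∈ I) :
    subI (stdK S F) I = {z | F - z ∉ I} := by
  ext z
  simp only [subI, mem_setOf_eq]
  constructor
  · intro hz hmem
    have h1 : z + (F - z) ∈ stdK S F := hz _ hmem
    rw [show z + (F - z) = F by ring] at h1
    exact h1.2 (by simpa using hS.1)
  · intro hz i hi
    have h1 : F - (z + i) ∉ S := by
      intro h
      have := hI i hi _ h
      rw [show i + (F - (z + i)) = F - z by ring] at this
      exact hz this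
    refine ⟨?_, h1⟩
    by_contra hlt
    push_neg at hlt
    exact h1 (hF.2 _ (by linarith))

private lemma K_add_S (hS : IsNumSgrp S) (hF : IsFrobOf S F) :
    ∀ k ∈ stdK S F, ∀ s ∈ S, k + s ∈ stdK S F := by
  intro k hk s hs
  refine ⟨by have := hS.2.2.1 s hs; linarith [hk.1], fun h => hk.2 ?_⟩
  have := hS.2.1 _ h _ hs
  rw [show F - (k + s) + s = F - k by ring] at this
  exact this

private lemma K_sub_K (hS : IsNumSgrp S) (hF : IsFrobOf S F) :
    subI (stdK S F) (stdK S F) = S := by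
  rw [dualK hS hF (K_add_S hS hF)]
  ext z
  simp only [stdK, mem_setOf_eq, not_and, not_not, sub_sub_cancel]
  constructor
  · intro h
    by_cases hz : 0 ≤ F - z
    · exact h hz
    · exact hF.2 z (by linarith)
  · exact fun hz _ => hz

private lemma KK_add_S (hS : IsNumSgrp S) (hF : IsFrobOf S F) :
    ∀ w ∈ stdK S F + stdK S F, ∀ s ∈ S, w + s ∈ stdK S F + stdK S F := by
  intro w hw s hs
  obtain ⟨a, ha, b, hb, rfl⟩ := Set.mem_add.mp hw
  exact Set.mem_add.mpr ⟨a, ha, b + s, K_add_S hS hF b hb s hs, by ring⟩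

private lemma T_eq (hS : IsNumSgrp S) (hF : IsFrobOf S F) :
    subI S (stdK S F) = {z | F - z ∉ stdK S F + stdK S F} := by
  have h1 : subI S (stdK S F) = subI (stdK S F) (stdK S F + stdK S F) := by
    ext z
    simp only [subI, mem_setOf_eq]
    constructor
    · intro h w hw
      obtain ⟨a, ha, b, hb, rfl⟩ := Set.mem_add.mp hw
      have h2 : z + a ∈ S := h a ha
      have := K_add_S hS hF b hb _ h2
      rw [show b + (z + a) = z + (a + b) by ring] at this
      exact this
    · intro h k hk
      have h2 : ∀ k' ∈ stdK S F, (z + k) + k' ∈ stdK S F := by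
        intro k' hk'
        have := h (k + k') (Set.add_mem_add hk hk')
        rw [show z + (k + k') = z + k + k' by ring] at this
        exact this
      have h3 : z + k ∈ subI (stdK S F) (stdK S F) := h2
      rw [K_sub_K hS hF] at h3
      exact h3
  rw [h1, dualK hS hF (KK_add_S hS hF)]

private lemma KK_eq (hS : IsNumSgrp S) (hF : IsFrobOf S F) :
    stdK S F + stdK S F = {z | F - z ∉ subI S (stdK S F)} := by
  ext z
  rw [T_eq hS hF]
  simp [sub_sub_cancel]

private lemma star_eq (hS : IsNumSgrp S) (hF : IsFrobOf S F) :
    (stdK S F + stdK S F) \ stdK S F = (fun x => F - x) '' (S \ subI S (stdK S F)) := by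
  ext z
  constructor
  · rintro ⟨hz2, hzK⟩
    have hz0 : 0 ≤ z := by
      obtain ⟨a, ha, b, hb, rfl⟩ := Set.mem_add.mp hz2
      linarith [ha.1, hb.1]
    have hFz : F - z ∈ S := by
      by_contra h
      exact hzK ⟨hz0, h⟩
    have hFzT : F - z ∉ subI S (stdK S F) := by
      rw [KK_eq hS hF] at hz2
      exact hz2
    exact ⟨F - z, ⟨hFz, hFzT⟩, by ring⟩
  · rintro ⟨w, ⟨hwS, hwT⟩, rfl⟩
    constructor
    · rw [KK_eq hS hF]
      simpa [sub_sub_cancel] using hwT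
    · intro hK
      exact hK.2 (by simpa [sub_sub_cancel] using hwS)

private lemma sym_iff (hS : IsNumSgrp S) (hF : IsFrobOf S F) :
    stdK S F + stdK S F = stdK S F ↔ S = stdK S F := by
  constructor
  · intro h
    refine Subset.antisymm (S_sub_K hS hF) (fun k hk => ?_)
    have h1 : k ∈ subI (stdK S F) (stdK S F) := by
      intro k' hk'
      have := Set.add_mem_add hk hk'
      rwa [h] at this
    rwa [K_sub_K hS hF] at h1
  · intro h
    apply Subset.antisymm
    · intro z hz
      obtain ⟨a, ha, b, hb, rfl⟩ := Set.mem_add.mp hz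
      rw [← h] at ha hb ⊢
      exact hS.2.1 a ha b hb
    · intro z hz
      have h0 : (0:ℤ) ∈ stdK S F := S_sub_K hS hF hS.1
      have := Set.add_mem_add hz h0
      simpa using this

private lemma F_nonneg (hS : IsNumSgrp S) (hF : IsFrobOf S F) (hne : S ≠ stdK S F) : 0 ≤ F := by
  by_contra h
  push_neg at h
  exact hne (Subset.antisymm (S_sub_K hS hF) (fun x hx => hF.2 x (by linarith [hx.1])))

private lemma T_sub_S (hS : IsNumSgrp S) (hF : IsFrobOf S F) : subI S (stdK S F) ⊆ S := by
  intro t ht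
  have := ht 0 (S_sub_K hS hF hS.1)
  simpa using this

private lemma zeroT_iff (hS : IsNumSgrp S) (hF : IsFrobOf S F) :
    (0:ℤ) ∈ subI S (stdK S F) ↔ S = stdK S F := by
  constructor
  · intro h
    refine Subset.antisymm (S_sub_K hS hF) fun k hk => by simpa using h k hk
  · intro h k hk
    rw [zero_add, h]
    exact hk

private lemma T_sub_M (hS : IsNumSgrp S) (hF : IsFrobOf S F) (hne : S ≠ stdK S F) :
    subI S (stdK S F) ⊆ maxId S := by
  intro t ht
  refine mem_maxId.mpr ⟨T_sub_S hS hF ht, ?_⟩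
  rintro rfl
  exact hne ((zeroT_iff hS hF).mp ht)

private lemma T_up (hS : IsNumSgrp S) (hF : IsFrobOf S F) {z : ℤ} (hz : F < z) :
    z ∈ subI S (stdK S F) :=
  fun k hk => hF.2 _ (by linarith [hk.1])

private lemma pf_add_ne (hS : IsNumSgrp S) (hF : IsFrobOf S F) (hne : S ≠ stdK S F) {f m : ℤ}
    (hf : f ∈ subI S (maxId S)) (hfS : f ∉ S) (hm : m ∈ maxId S) : f + m ≠ 0 := by
  intro h0
  have hF0 := F_nonneg hS hF hne
  have hm1 := one_le_M hS hm
  have hFm : F + m ∈ maxId S := mem_maxId.mpr ⟨hF.2 _ (by linarith), by omega⟩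
  have := hf _ hFm
  rw [show f + (F + m) = F + (f + m) by ring, h0, add_zero] at this
  exact hF.1 this

private lemma subMM_eq (hS : IsNumSgrp S) (hF : IsFrobOf S F) (hne : S ≠ stdK S F) :
    subI (maxId S) (maxId S) = subI S (maxId S) := by
  ext z
  constructor
  · exact fun h m hm => (h m hm).1
  · intro h m hm
    refine mem_maxId.mpr ⟨h m hm, ?_⟩
    by_cases hz : z ∈ S
    · have h1 := hS.2.2.1 z hz
      have h2 := one_le_M hS hm
      omega
    · exact pf_add_ne hS hF hne h hz hm

private lemma twoM_iff (hS : IsNumSgrp S) (hF : IsFrobOf S F) :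
    maxId S + maxId S ⊆ subI S (stdK S F) ↔
      ∀ x ∈ (S \ subI S (stdK S F)) \ {0}, IsMinGen S x := by
  constructor
  · rintro h x ⟨⟨hxS, hxT⟩, hx0⟩
    exact ⟨mem_maxId.mpr ⟨hxS, by simpa using hx0⟩, fun hmm => hxT (h hmm)⟩
  · intro h w hw
    obtain ⟨m, hm, m', hm', rfl⟩ := Set.mem_add.mp hw
    by_contra hT
    have hw0 : m + m' ≠ 0 := by
      have := one_le_M hS hm
      have := one_le_M hS hm'
      omega
    have hwS : m + m' ∈ S := hS.2.1 m hm.1 m' hm'.1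
    have := h (m + m') ⟨⟨hwS, hT⟩, by simpa using hw0⟩
    exact this.2 hw

private lemma pf_to_T (hS : IsNumSgrp S) (hF : IsFrobOf S F) (hne : S ≠ stdK S F)
    (hpair : ∀ x ∈ (S \ subI S (stdK S F)) \ {0}, ∀ y ∈ (S \ subI S (stdK S F)) \ {0},
      x - y ∉ PF S S) :
    ∀ f ∈ subI S (maxId S), f ∉ S → ∀ m ∈ maxId S, f + m ∈ subI S (stdK S F) := by
  intro f hf hfS m hm
  by_contra hnT
  have hex : ∃ k ∈ stdK S F, f + m + k ∉ S := by
    by_contra hc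
    push_neg at hc
    exact hnT fun k hk => hc k hk
  obtain ⟨k, hk, hks⟩ := hex
  have hmkM : m + k ∉ maxId S := by
    intro h
    have := hf _ h
    rw [show f + (m + k) = f + m + k by ring] at this
    exact hks this
  have hmkS : m + k ∉ S := by
    intro h
    refine hmkM (mem_maxId.mpr ⟨h, ?_⟩)
    have := one_le_M hS hm
    have := hk.1
    omega
  have hmT : m ∉ subI S (stdK S F) := fun h => hmkS (h k hk)
  have hmD : m ∈ (S \ subI S (stdK S F)) \ {0} :=
    ⟨⟨hm.1, hmT⟩, by simpa using (mem_maxId.mp hm).2⟩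
  have hfmD : f + m ∈ (S \ subI S (stdK S F)) \ {0} :=
    ⟨⟨hf m hm, hnT⟩, by simpa using pf_add_ne hS hF hne hf hfS hm⟩
  have := hpair _ hfmD _ hmD
  rw [show f + m - m = f by ring] at this
  exact this ⟨hf, hfS⟩

private lemma E_iff (hS : IsNumSgrp S) (hF : IsFrobOf S F) (hne : S ≠ stdK S F) :
    (subI (maxId S) (maxId S) = subI (subI S (stdK S F)) (maxId S) ∪ {0}) ↔
      (maxId S + maxId S ⊆ subI S (stdK S F) ∧
        ∀ f ∈ subI S (maxId S), f ∉ S → ∀ m ∈ maxId S, f + m ∈ subI S (stdK S F)) := by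
  rw [subMM_eq hS hF hne]
  constructor
  · intro h
    constructor
    · intro w hw
      obtain ⟨m, hm, m', hm', rfl⟩ := Set.mem_add.mp hw
      have hmS : m ∈ subI S (maxId S) := fun m'' hm'' => hS.2.1 m hm.1 m'' hm''.1
      rw [h] at hmS
      rcases hmS with h1 | h1
      · exact h1 m' hm'
      · exact absurd (by simpa using h1) (mem_maxId.mp hm).2
    · intro f hf hfS m hm
      rw [h] at hf
      rcases hf with h1 | h1
      · exact h1 m hm
      · have h0 : f = 0 := by simpa using h1
        exact absurd (h0 ▸ hS.1) hfS
  · rintro ⟨h2M, hPF⟩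
    ext z
    constructor
    · intro hz
      by_cases hz0 : z = 0
      · exact Or.inr (by simp [hz0])
      · left
        intro m hm
        by_cases hzS : z ∈ S
        · exact h2M (Set.add_mem_add (mem_maxId.mpr ⟨hzS, hz0⟩) hm)
        · exact hPF z hz hzS m hm
    · rintro (hz | hz)
      · exact fun m hm => T_sub_S hS hF (hz m hm)
      · have hz0 : z = 0 := by simpa using hz
        intro m hm
        rw [hz0, zero_add]
        exact hm.1

end AuxGAS

theorem stmt11 (S : Set ℤ) (hS : IsNumSgrp S) (F : ℤ) (hF : IsFrobOf S F) :
    IsGAS S F ↔ (S = stdK S F ∨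
      (maxId S + maxId S ⊆ subI S (stdK S F) ∧ subI S (stdK S F) ⊆ maxId S ∧
       subI (maxId S) (maxId S) = subI (subI S (stdK S F)) (maxId S) ∪ {0})) := by 
  by_cases hsy : S = stdK S F
  · constructor
    · intro _
      exact Or.inl hsy
    · intro _
      exact Or.inl ((sym_iff hS hF).mpr hsy)
  · have hne := hsy
    constructor
    · rintro (h1 | ⟨X, hXgen, hXpf, hXeq⟩)
      · exact absurd ((sym_iff hS hF).mp h1) hsy
      · right
        have hinj : Function.Injective (fun x : ℤ => F - x) := by
          intro a b h
          simp only at h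
          omega
        have himg : (fun x => F - x) '' (S \ subI S (stdK S F)) =
            (fun x => F - x) '' ((X : Set ℤ) ∪ {0}) := by
          rw [Set.image_union, Set.image_singleton, ← star_eq hS hF, hXeq]
          simp
        have hset : S \ subI S (stdK S F) = (X : Set ℤ) ∪ {0} :=
          (Set.image_eq_image hinj).mp himg
        have hD : ∀ x ∈ (S \ subI S (stdK S F)) \ {0}, x ∈ (X : Set ℤ) := by
          intro x hx
          have hx1 := hx.1
          rw [hset] at hx1
          rcases hx1 with h | h
          · exact h
          · exact absurd h hx.2
        have h2M := (twoM_iff hS hF).mpr (fun x hx => hXgen x (hD x hx))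
        refine ⟨h2M, T_sub_M hS hF hne, ?_⟩
        exact (E_iff hS hF hne).mpr ⟨h2M,
          pf_to_T hS hF hne (fun x hx y hy => hXpf x (hD x hx) y (hD y hy))⟩
    · rintro (h | ⟨h2M, hTM, hE⟩)
      · exact absurd h hsy
      · right
        have hPFM := ((E_iff hS hF hne).mp hE).2
        have hpair : ∀ x ∈ (S \ subI S (stdK S F)) \ {0}, ∀ y ∈ (S \ subI S (stdK S F)) \ {0},
            x - y ∉ PF S S := by
          intro x hx y hy hpf
          have hyM : y ∈ maxId S := mem_maxId.mpr ⟨hy.1.1, by simpa using hy.2⟩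
          have := hPFM (x - y) hpf.1 hpf.2 y hyM
          rw [show x - y + y = x by ring] at this
          exact hx.1.2 this
        have hfin : ((S \ subI S (stdK S F)) \ {0}).Finite := by
          apply (Set.finite_Icc 0 F).subset
          rintro x ⟨⟨hxS, hxT⟩, _⟩
          refine ⟨hS.2.2.1 x hxS, ?_⟩
          by_contra h
          push_neg at h
          exact hxT (T_up hS hF h)
        refine ⟨hfin.toFinset, ?_, ?_, ?_⟩
        · intro x hx
          exact (twoM_iff hS hF).mp h2M x (by simpa using hx)
        · intro x hx y hy
          exact hpair x (by simpa using hx) y (by simpa using hy)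
        · rw [star_eq hS hF]
          have h0 : (0:ℤ) ∈ S \ subI S (stdK S F) :=
            ⟨hS.1, fun h => hne ((zeroT_iff hS hF).mp h)⟩
          have hsets : S \ subI S (stdK S F) = ((S \ subI S (stdK S F)) \ {0}) ∪ {0} := by
            ext x
            by_cases hx : x = 0 <;> simp [hx, h0]
          have himg2 : (fun x => F - x) '' (S \ subI S (stdK S F)) =
              (fun x => F - x) '' (((S \ subI S (stdK S F)) \ {0}) ∪ {0}) := by
            rw [← hsets]
          rw [himg2, Set.image_union, Set.image_singleton, Set.Finite.coe_toFinset]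
          simp
end

section
/- Suppose 2K \ K = {F(S) − x₁, …, F(S) − x_r, F(S)} where each x_i is a minimal generator of S. If F(S) − x ∈ nK \ (n−1)K for some n > 2 and x = s₁ + s₂ with s₁, s₂ ∈ M, then F(S) − s₁ ∈ (n−1)K. -/
open Set Pointwise

lemma nK_nonneg (S : Set ℤ) (F : ℤ) : ∀ m, ∀ y ∈ nK (stdK S F) m, 0 ≤ y := by
  intro m
  induction m with
  | zero => intro y hy; simp only [nK, Set.mem_singleton_iff] at hy; omega
  | succ p ih =>
    match p, ih with
    | 0, _ => intro y hy; exact hy.1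
    | q+1, ih =>
      intro y hy
      obtain ⟨a, ha, b, hb, rfl⟩ := Set.mem_add.mp hy
      exact add_nonneg (ih a ha) hb.1

theorem stmt12 (S : Set ℤ) (hS : IsNumSgrp S) (F : ℤ) (hF : IsFrobOf S F)
    (X : Finset ℤ) (hX : ∀ x ∈ X, IsMinGen S x)
    (h2K : (stdK S F + stdK S F) \ stdK S F = (fun x => F - x) '' (X : Set ℤ) ∪ {F})
    (n : ℕ) (hn : 2 < n) (x s₁ s₂ : ℤ) (hx : x = s₁ + s₂)
    (hs₁ : s₁ ∈ maxId S) (hs₂ : s₂ ∈ maxId S)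
    (hmem : F - x ∈ nK (stdK S F) n \ nK (stdK S F) (n - 1)) :
    F - s₁ ∈ nK (stdK S F) (n - 1) :=  by
  obtain ⟨m, rfl⟩ : ∃ m, n = m + 3 := ⟨n - 3, by omega⟩
  set K := stdK S F with hKdef
  have hKadd : ∀ k ∈ K, ∀ s ∈ S, k + s ∈ K := by
    intro k hk s hs
    refine ⟨add_nonneg hk.1 (hS.2.2.1 s hs), fun hcon => ?_⟩
    have h2 := hS.2.1 _ hcon s hs
    have he : F - (k + s) + s = F - k := by ring
    rw [he] at h2
    exact hk.2 h2
  have h2Kcl : ∀ y ∈ K + K, y ∉ K → y = F ∨ ∃ j ∈ X, y = F - j := by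
    intro y hy hy'
    have hm : y ∈ (K + K) \ K := ⟨hy, hy'⟩
    rw [h2K] at hm
    rcases hm with h | h
    · obtain ⟨j, hj, hje⟩ := h
      exact Or.inr ⟨j, hj, hje.symm⟩
    · exact Or.inl h
  obtain ⟨hin, hout⟩ := hmem
  have hred : m + 3 - 1 = m + 2 := rfl
  rw [hred] at hout ⊢
  have h1 : F - x ∈ nK K (m+1) + K + K := hin
  obtain ⟨u, hu, k2, hk2, hu2⟩ := Set.mem_add.mp h1
  obtain ⟨a, ha, k1, hk1, hu1⟩ := Set.mem_add.mp hu
  have hdec : a + k1 + k2 = F - x := by rw [hu1]; exact hu2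
  have ha0 : 0 ≤ a := nK_nonneg S F (m+1) a ha
  have hs1pos : 0 < s₁ := by
    have := hS.2.2.1 s₁ hs₁.1
    have h0 : s₁ ≠ 0 := hs₁.2
    omega
  have hs2pos : 0 < s₂ := by
    have := hS.2.2.1 s₂ hs₂.1
    have h0 : s₂ ≠ 0 := hs₂.2
    omega
  have hmem_aux : ∀ t ∈ K, a + t = F - s₁ → F - s₁ ∈ nK K (m+2) := by
    intro t ht hts
    show F - s₁ ∈ nK K (m+1) + K
    exact Set.mem_add.mpr ⟨a, ha, t, ht, hts⟩
  have hk12 : k1 + k2 ∉ K := by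
    intro hc
    apply hout
    show F - x ∈ nK K (m+1) + K
    exact Set.mem_add.mpr ⟨a, ha, k1 + k2, hc, by linarith⟩
  have hk12m : k1 + k2 ∈ K + K := Set.mem_add.mpr ⟨k1, hk1, k2, hk2, rfl⟩
  rcases h2Kcl _ hk12m hk12 with hFe | ⟨jm, hjm, hjme⟩
  · exfalso; linarith
  · -- k1 + k2 = F - jm
    have hks : k2 + s₂ ∈ K := hKadd k2 hk2 s₂ hs₂.1
    by_cases ht : k1 + (k2 + s₂) ∈ K
    · exact hmem_aux _ ht (by linarith)
    · have htm : k1 + (k2 + s₂) ∈ K + K := Set.mem_add.mpr ⟨k1, hk1, k2 + s₂, hks, rfl⟩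
      rcases h2Kcl _ htm ht with hFe | ⟨j, hj, hje⟩
      · exfalso; linarith
      · exfalso
        -- jm = j + s₂ ∈ maxId + maxId, contradicting jm min gen
        have hjmin := hX jm hjm
        apply hjmin.2
        exact Set.mem_add.mpr ⟨j, (hX j hj).1, s₂, hs₂, by linarith⟩
end

section
/- Let S be a numerical semigroup with 2K \ K = {F(S) − x₁, …, F(S) − x_r, F(S)} where each x_i is a minimal generator. If x ∈ L(S) and F(S) − x ∉ PF(S), then x ∈ PF(S) and F(S) − x + x_i ∈ PF(S) for some i. -/
open Set Pointwise

theorem stmt15 (S : Set ℤ) (hS : IsNumSgrp S) (F : ℤ) (hF : IsFrobOf S F)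
    (X : Finset ℤ) (hX : ∀ x ∈ X, IsMinGen S x)
    (h2K : (stdK S F + stdK S F) \ stdK S F = (fun x => F - x) '' (X : Set ℤ) ∪ {F})
    (x : ℤ) (hx : x ∈ stdK S F \ S) (hnot : F - x ∉ PF S S) :
    x ∈ PF S S ∧ ∃ xi ∈ X, F - x + xi ∈ PF S S := by
  obtain ⟨⟨hx0, hFxS⟩, hxS⟩ := hx
  obtain ⟨h0S, haddS, hposS, -⟩ := hS
  obtain ⟨hFS, hFgt⟩ := hF
  have hle : ∀ z : ℤ, z ∉ S → z ≤ F := fun z hz => le_of_not_gt (fun h => hz (hFgt z h))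
  have hxF : x ≤ F := hle x hxS
  have hFxK : F - x ∈ stdK S F := ⟨by linarith, by simpa using hxS⟩
  -- witness from hnot, maximal one
  have hbdd : ∃ b : ℤ, ∀ z : ℤ, (z ∈ maxId S ∧ F - x + z ∉ S) → z ≤ b := by
    refine ⟨x, fun z ⟨hzM, hzNS⟩ => ?_⟩
    have := hle _ hzNS; linarith
  have hinh : ∃ z : ℤ, z ∈ maxId S ∧ F - x + z ∉ S := by
    by_contra h
    push_neg at h
    exact hnot ⟨fun j hj => h j hj, hFxS⟩
  obtain ⟨m, ⟨hmM, hmNS⟩, hmax⟩ := Int.exists_greatest_of_bdd hbdd hinh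
  have hmpos : 0 < m := lt_of_le_of_ne (hposS m hmM.1) (Ne.symm hmM.2)
  have hmx : m ≤ x := by have := hle _ hmNS; linarith
  have hxmK : x - m ∈ stdK S F := ⟨by linarith, by
    have : F - (x - m) = F - x + m := by ring
    rw [this]; exact hmNS⟩
  -- F - m ∈ (K+K) \ K
  have hFmKK : F - m ∈ stdK S F + stdK S F := by
    have := Set.add_mem_add hxmK hFxK
    have he : (x - m) + (F - x) = F - m := by ring
    rwa [he] at this
  have hFmNK : F - m ∉ stdK S F := fun ⟨_, h⟩ => h (by simpa using hmM.1)
  have hmX : m ∈ X := by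
    have : F - m ∈ (fun x => F - x) '' (X : Set ℤ) ∪ {F} := by
      rw [← h2K]; exact ⟨hFmKK, hFmNK⟩
    rcases this with ⟨xj, hxj, hxje⟩ | hFm
    · have : m = xj := by simp only at hxje; linarith [hxje]
      rwa [this]
    · exfalso
      have : m = 0 := by simp at hFm; linarith
      exact hmM.2 this
  -- F - x + m ∈ PF
  have hPF2 : F - x + m ∈ PF S S := by
    refine ⟨fun n hn => ?_, hmNS⟩
    by_contra hns
    have hnpos : 0 < n := lt_of_le_of_ne (hposS n hn.1) (Ne.symm hn.2)
    have hmn : m + n ∈ maxId S := ⟨haddS _ hmM.1 _ hn.1, by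
      simp only [Set.mem_singleton_iff]; intro h; linarith⟩
    have : m + n ≤ m := hmax (m + n) ⟨hmn, by
      have : F - x + (m + n) = F - x + m + n := by ring
      rw [this]; exact hns⟩
    linarith
  refine ⟨⟨fun n hn => ?_, hxS⟩, m, hmX, hPF2⟩
  -- x ∈ subI S (maxId S)
  by_contra hns
  have hnpos : 0 < n := lt_of_le_of_ne (hposS n hn.1) (Ne.symm hn.2)
  have hxnF : x + n ≤ F := hle _ hns
  have hFxnK : F - x - n ∈ stdK S F := ⟨by linarith, by
    have : F - (F - x - n) = x + n := by ring
    rw [this]; exact hns⟩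
  have hKK : F - (m + n) ∈ stdK S F + stdK S F := by
    have := Set.add_mem_add hxmK hFxnK
    have he : (x - m) + (F - x - n) = F - (m + n) := by ring
    rwa [he] at this
  have hNK : F - (m + n) ∉ stdK S F := fun ⟨_, h⟩ => h (by
    have : F - (F - (m + n)) = m + n := by ring
    rw [this]; exact haddS _ hmM.1 _ hn.1)
  have : F - (m + n) ∈ (fun x => F - x) '' (X : Set ℤ) ∪ {F} := by
    rw [← h2K]; exact ⟨hKK, hNK⟩
  rcases this with ⟨xj, hxj, hxje⟩ | hFm
  · have heq : m + n = xj := by simp only at hxje; linarith [hxje]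
    have hmin := hX xj hxj
    exact hmin.2 (heq ▸ Set.add_mem_add ⟨hmM.1, hmM.2⟩ ⟨hn.1, hn.2⟩)
  · simp at hFm; linarith
end

section
/- For a numerical semigroup S with multiplicity e and maximal ideal M, viewing M − e as a relative ideal of the numerical semigroup M − M, one has F(M − M) = F(M − e) = F(S) − e, and K(M − M) \ (M − e) = {x − e : x ∈ L(S) and F(S) − x ∉ PF(S)}. -/
open Set Pointwise

theorem stmt16 (S : Set ℤ) (hS : IsNumSgrp S) (F e : ℤ) (hF : IsFrobOf S F) (hFpos : 0 < F)
    (he : IsMult S e) :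
    IsFrobOf (subI (maxId S) (maxId S)) (F - e) ∧
    IsFrobOf ((fun m => m - e) '' maxId S) (F - e) ∧
    stdK (subI (maxId S) (maxId S)) (F - e) \ ((fun m => m - e) '' maxId S) =
      (fun x => x - e) '' {x : ℤ | x ∉ S ∧ F - x ∉ S ∧ F - x ∉ PF S S} := by
  obtain ⟨h0, hadd, hnneg, -⟩ := hS
  obtain ⟨hFnS, hFgt⟩ := hF
  obtain ⟨⟨heS, he0⟩, hemin⟩ := he
  have hepos : 0 < e := lt_of_le_of_ne (hnneg e heS) (fun h => he0 h.symm)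
  have heM : e ∈ maxId S := ⟨heS, fun h => he0 (Set.mem_singleton_iff.mp h)⟩
  have hMem : ∀ z, F < z → z ∈ maxId S := fun z hz =>
    ⟨hFgt z hz, fun h => by rw [Set.mem_singleton_iff] at h; omega⟩
  have hMpos : ∀ m ∈ maxId S, e ≤ m := hemin
  refine ⟨⟨?_, ?_⟩, ⟨?_, ?_⟩, ?_⟩
  · intro hmem
    have h1 := hmem e heM
    have h2 : F ∈ S := by
      have := h1.1
      rwa [show F - e + e = F by ring] at this
    exact hFnS h2
  · intro z hz m hm
    have : F < z + m := by have := hMpos m hm; omega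
    exact hMem _ this
  · rintro ⟨m, hm, hmeq⟩
    simp only at hmeq
    have : m = F := by omega
    exact hFnS (this ▸ hm.1)
  · intro z hz
    exact ⟨z + e, hMem _ (by omega), by simp⟩
  · ext y
    simp only [Set.mem_diff, Set.mem_image, Set.mem_setOf_eq, stdK]
    constructor
    · rintro ⟨⟨hy0, hyK⟩, hyI⟩
      have hxS : y + e ∉ S := fun hxS =>
        hyI ⟨y + e, ⟨hxS, fun h => by rw [Set.mem_singleton_iff] at h; omega⟩, by simp⟩
      have : ¬ ∀ j ∈ maxId S, F - e - y + j ∈ maxId S := hyK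
      push_neg at this
      obtain ⟨m, hm, hnm⟩ := this
      have hmpos : 0 < m := lt_of_lt_of_le hepos (hMpos m hm)
      have hFx : F - (y + e) ∉ S := by
        intro hs
        rcases eq_or_ne (F - (y + e)) 0 with h0' | h0'
        · apply hnm
          rw [show F - e - y + m = m by omega]
          exact hm
        · apply hnm
          have hmemS : F - (y + e) + m ∈ S := hadd _ hs _ hm.1
          have hFxpos : 0 < F - (y + e) := by
            have := hnneg _ hs
            omega
          rw [show F - e - y + m = F - (y + e) + m by ring]
          exact ⟨hmemS, fun h => by rw [Set.mem_singleton_iff] at h; omega⟩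
      have hFxmS : F - (y + e) + m ∉ S := by
        intro hs
        apply hnm
        rw [show F - e - y + m = F - (y + e) + m by ring]
        refine ⟨hs, fun h => ?_⟩
        rw [Set.mem_singleton_iff] at h
        -- then y + e = F + m > F, so y + e ∈ S, contradiction
        exact hxS (hFgt _ (by omega))
      refine ⟨y + e, ⟨hxS, hFx, ?_⟩, by simp⟩
      intro hPF
      exact hFxmS (hPF.1 m hm)
    · rintro ⟨x, ⟨hxS, hFxS, hFxPF⟩, rfl⟩
      have hFxsub : F - x ∉ subI S (maxId S) := by
        intro h
        exact hFxPF ⟨h, hFxS⟩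
      have : ¬ ∀ j ∈ maxId S, F - x + j ∈ S := hFxsub
      push_neg at this
      obtain ⟨m, hm, hnm⟩ := this
      have hxpos : 0 < x := by
        rcases lt_trichotomy x 0 with h | h | h
        · exact absurd (hFgt (F - x) (by omega)) hFxS
        · exact absurd (h ▸ h0) hxS
        · exact h
      have hxe : e ≤ x := by
        by_contra hlt
        push_neg at hlt
        have hme := hMpos m hm
        exact hnm (hFgt _ (by omega))
      refine ⟨⟨by omega, ?_⟩, ?_⟩
      · intro hT
        have := (hT m hm).1
        rw [show F - e - (x - e) + m = F - x + m by ring] at this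
        exact hnm this
      · rintro ⟨m', hm', hmeq⟩
        have : m' = x := by omega
        exact hxS (this ▸ hm'.1)
end

section
/- A numerical semigroup S is almost symmetric if and only if M − e is a canonical ideal of the numerical semigroup M − M. -/
open Set Pointwise

theorem stmt17 (S : Set ℤ) (hS : IsNumSgrp S) (F e : ℤ) (hF : IsFrobOf S F) (hFpos : 0 < F)
    (he : IsMult S e) (FMM : ℤ) (hFMM : IsFrobOf (subI (maxId S) (maxId S)) FMM) :
    IsAlmostSym S F ↔
      ∃ c : ℤ, (fun m => m - e) '' maxId S =
        (fun k => c + k) '' stdK (subI (maxId S) (maxId S)) FMM := by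
  obtain ⟨h0S, haddS, hnnS, -⟩ := hS
  obtain ⟨heM, hemin⟩ := he
  obtain ⟨hFnS, hFgt⟩ := hF
  have heS : e ∈ S := heM.1
  have hene : e ≠ 0 := by simpa using heM.2
  have hepos : 0 < e := lt_of_le_of_ne (hnnS e heS) (Ne.symm hene)
  have hMpos : ∀ m ∈ maxId S, 0 < m := fun m hm =>
    lt_of_le_of_ne (hnnS m hm.1) (Ne.symm (by simpa using hm.2))
  have hTF : ∀ z, F - e < z → z ∈ subI (maxId S) (maxId S) := by
    intro z hz m hm
    have hme := hemin m hm
    refine ⟨hFgt _ (by linarith), ?_⟩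
    have hp : (0:ℤ) < z + m := by linarith
    simpa using hp.ne'
  have hFeT : F - e ∉ subI (maxId S) (maxId S) := by
    intro h
    have h1 := (h e heM).1
    have h2 : F - e + e = F := by ring
    rw [h2] at h1
    exact hFnS h1
  obtain ⟨hFMMn, hFMMgt⟩ := hFMM
  have hFMMeq : FMM = F - e := by
    rcases lt_trichotomy FMM (F - e) with h | h | h
    · exact absurd (hFMMgt _ h) hFeT
    · exact h
    · exact absurd (hTF _ h) hFMMn
  subst hFMMeq
  -- M - e ⊆ K(T), always
  have hA : ∀ m ∈ maxId S, m - e ∈ stdK (subI (maxId S) (maxId S)) (F - e) := by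
    intro m hm
    refine ⟨by have := hemin m hm; linarith, ?_⟩
    intro h
    have h1 := (h m hm).1
    have h2 : F - e - (m - e) + m = F := by ring
    rw [h2] at h1
    exact hFnS h1
  -- S - M ⊆ K ∪ {F}, always
  have hC : subI S (maxId S) ⊆ stdK S F ∪ {F} := by
    intro x hx
    have hxe : x + e ∈ S := hx e heM
    have hx0 : 0 ≤ x := by
      by_contra hneg
      push_neg at hneg
      rcases eq_or_ne (x + e) 0 with h0 | h0
      · have hFe : F + e ∈ maxId S :=
          ⟨hFgt _ (by linarith), by simpa using (by linarith : (0:ℤ) < F + e).ne'⟩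
        have h1 := hx _ hFe
        have h2 : x + (F + e) = F := by linarith
        rw [h2] at h1
        exact hFnS h1
      · have hxeM : x + e ∈ maxId S := ⟨hxe, by simpa using h0⟩
        have := hemin _ hxeM
        linarith
    rcases em (F - x ∈ S) with hFx | hFx
    · rcases eq_or_ne (F - x) 0 with h0 | h0
      · right; simp only [Set.mem_singleton_iff]; linarith
      · exfalso
        have h1 := hx _ ⟨hFx, by simpa using h0⟩
        have h2 : x + (F - x) = F := by ring
        rw [h2] at h1
        exact hFnS h1
    · exact Or.inl ⟨hx0, hFx⟩
  have hD : F ∈ subI S (maxId S) := by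
    intro m hm
    exact hFgt _ (by have := hMpos m hm; linarith)
  -- if K(T) ⊆ M - e then K ⊆ S - M
  have hE : (∀ x ∈ stdK (subI (maxId S) (maxId S)) (F - e), x + e ∈ maxId S) →
      stdK S F ⊆ subI S (maxId S) := by
    intro hKM x hx m hm
    obtain ⟨hx0, hxF⟩ := hx
    rcases le_or_gt e (F - x) with hcase | hcase
    · have hxT : x ∈ subI (maxId S) (maxId S) := by
        by_contra hnot
        have hw : F - x - e ∈ stdK (subI (maxId S) (maxId S)) (F - e) := by
          refine ⟨by linarith, ?_⟩
          intro hT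
          have h2 : F - e - (F - x - e) = x := by ring
          rw [h2] at hT
          exact hnot hT
        have h1 := hKM _ hw
        have h2 : F - x - e + e = F - x := by ring
        rw [h2] at h1
        exact hxF h1.1
      exact (hxT m hm).1
    · have := hemin m hm
      exact hFgt _ (by linarith)
  constructor
  · intro hAS
    have hKsub : stdK S F ⊆ subI S (maxId S) := by
      rw [IsAlmostSym] at hAS
      rw [hAS]
      exact Set.subset_union_left
    -- K(T) ⊆ M - e
    have hKTsub : ∀ x ∈ stdK (subI (maxId S) (maxId S)) (F - e), x + e ∈ maxId S := by
      intro x hx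
      obtain ⟨hx0, hxT⟩ := hx
      by_contra hnot
      have hxepos : 0 < x + e := by linarith
      have hxeS : x + e ∉ S := fun h => hnot ⟨h, by simpa using hxepos.ne'⟩
      rcases lt_trichotomy (x + e) F with hlt | heq | hgt
      · have hmem : F - (x + e) ∈ stdK S F := by
          refine ⟨by linarith, ?_⟩
          have h2 : F - (F - (x + e)) = x + e := by ring
          rw [h2]
          exact hxeS
        have hSM := hKsub hmem
        apply hxT
        intro m hm
        have h1 : F - e - x + m ∈ S := by
          have h3 := hSM m hm
          have h2 : F - (x + e) + m = F - e - x + m := by ring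
          rwa [h2] at h3
        refine ⟨h1, ?_⟩
        have hmp := hMpos m hm
        have hp : (0:ℤ) < F - e - x + m := by linarith
        simpa using hp.ne'
      · apply hxT
        have h2 : F - e - x = 0 := by linarith
        rw [h2]
        intro m hm
        simpa using hm
      · exact hxeS (hFgt _ hgt)
    refine ⟨0, ?_⟩
    ext z
    simp only [Set.mem_image]
    constructor
    · rintro ⟨m, hm, rfl⟩
      exact ⟨m - e, hA m hm, by ring⟩
    · rintro ⟨k, hk, rfl⟩
      exact ⟨k + e, hKTsub k hk, by ring⟩
  · rintro ⟨c, hc⟩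
    have h1 : ∀ m ∈ maxId S, ∃ k ∈ stdK (subI (maxId S) (maxId S)) (F - e), c + k = m - e := by
      intro m hm
      have hmem : m - e ∈ (fun k => c + k) '' stdK (subI (maxId S) (maxId S)) (F - e) := by
        rw [← hc]
        exact ⟨m, hm, rfl⟩
      obtain ⟨k, hk, hke⟩ := hmem
      exact ⟨k, hk, hke⟩
    have h2 : ∀ k ∈ stdK (subI (maxId S) (maxId S)) (F - e), ∃ m ∈ maxId S, m - e = c + k := by
      intro k hk
      have hmem : c + k ∈ (fun m => m - e) '' maxId S := by
        rw [hc]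
        exact ⟨k, hk, rfl⟩
      obtain ⟨m, hm, hme⟩ := hmem
      exact ⟨m, hm, hme⟩
    have hc0 : c = 0 := by
      obtain ⟨k, hk, hke⟩ := h1 e heM
      have hk0 := hk.1
      have h0K : (0:ℤ) ∈ stdK (subI (maxId S) (maxId S)) (F - e) := by
        refine ⟨le_refl 0, ?_⟩
        have h2 : F - e - 0 = F - e := by ring
        rw [h2]
        exact hFeT
      obtain ⟨m, hm, hme⟩ := h2 0 h0K
      have := hemin m hm
      linarith
    subst hc0
    have hKTsub : ∀ x ∈ stdK (subI (maxId S) (maxId S)) (F - e), x + e ∈ maxId S := by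
      intro x hx
      obtain ⟨m, hm, hme⟩ := h2 x hx
      have hmx : m = x + e := by linarith
      rwa [← hmx]
    show subI S (maxId S) = stdK S F ∪ {F}
    apply Set.Subset.antisymm hC
    intro z hz
    rcases hz with hz | hz
    · exact hE hKTsub hz
    · rw [Set.mem_singleton_iff] at hz
      subst hz
      exact hD
end

section
/- A numerical semigroup S is GAS if and only if M − e is an almost canonical ideal of the numerical semigroup M − M. -/
open Set Pointwise

theorem stmt18 (S : Set ℤ) (hS : IsNumSgrp S) (F e : ℤ) (hF : IsFrobOf S F) (hFpos : 0 < F)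
    (he : IsMult S e) (FMM : ℤ) (hFMM : IsFrobOf (subI (maxId S) (maxId S)) FMM) :
    IsGAS S F ↔
      IsAlmostCanonical (subI (maxId S) (maxId S)) FMM
        ((fun m => m - e) '' maxId S) := by
  obtain ⟨hS0, hSadd, hSnn, -⟩ := hS
  obtain ⟨hFnot, hFgt⟩ := hF
  have memM : ∀ x : ℤ, x ∈ maxId S ↔ x ∈ S ∧ x ≠ 0 := by
    intro x; simp [maxId]
  have hMpos : ∀ x ∈ maxId S, (0:ℤ) < x := by
    intro x hx
    obtain ⟨h1, h2⟩ := (memM x).1 hx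
    exact lt_of_le_of_ne (hSnn x h1) (Ne.symm h2)
  have hMF : ∀ z : ℤ, F < z → z ∈ maxId S := by
    intro z hz
    exact (memM z).2 ⟨hFgt z hz, by omega⟩
  set T := subI (maxId S) (maxId S) with hTdef
  have memT : ∀ x : ℤ, x ∈ T ↔ ∀ m ∈ maxId S, x + m ∈ maxId S := fun _ => Iff.rfl
  have hTM : ∀ t ∈ T, ∀ m ∈ maxId S, t + m ∈ maxId S := fun t ht => ht
  have hST : S ⊆ T := by
    intro s hs
    refine (memT s).2 (fun m hm => (memM _).2 ⟨hSadd s hs m ((memM m).1 hm).1, ?_⟩)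
    have h1 := hSnn s hs
    have h2 := hMpos m hm
    omega
  have hFT : F ∈ T := by
    refine (memT F).2 (fun m hm => hMF _ ?_)
    have := hMpos m hm; omega
  have hTgt : ∀ z, F < z → z ∈ T := fun z hz => hST (hFgt z hz)
  have hFMMlt : FMM < F := by
    rcases lt_trichotomy FMM F with h | h | h
    · exact h
    · exact absurd (h ▸ hFT) hFMM.1
    · exact absurd (hTgt FMM h) hFMM.1
  have hTle : ∀ x : ℤ, x ∉ T → x ≤ FMM := by
    intro x hx
    by_contra h
    exact hx (hFMM.2 x (by omega))
  have hgaple : ∀ g : ℤ, g ∉ S → g ≤ F := by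
    intro g hg
    by_contra h
    exact hg (hFgt g (by omega))
  have htpos : ∀ t ∈ T, t ≠ 0 → (0:ℤ) < t := by
    intro t ht htne
    by_contra h
    push_neg at h
    have h1 : F - t ∈ maxId S := hMF _ (by omega)
    have h2 := hTM t ht _ h1
    rw [show t + (F - t) = F by ring] at h2
    exact hFnot ((memM F).1 h2).1
  have memPF : ∀ f : ℤ, f ∈ PF S S ↔ ((∀ m ∈ maxId S, f + m ∈ S) ∧ f ∉ S) := fun _ => Iff.rfl
  have hPFT : ∀ f ∈ PF S S, f ∈ T ∧ 0 < f := by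
    intro f hf
    obtain ⟨hf1, hf2⟩ := (memPF f).1 hf
    have hfpos : 0 < f := by
      rcases lt_trichotomy f 0 with h | h | h
      · exfalso
        have h1 : F - f ∈ maxId S := hMF _ (by omega)
        have h2 := hf1 _ h1
        rw [show f + (F - f) = F by ring] at h2
        exact hFnot h2
      · exact absurd (h ▸ hS0) hf2
      · exact h
    refine ⟨(memT f).2 (fun m hm => (memM _).2 ⟨hf1 m hm, ?_⟩), hfpos⟩
    have := hMpos m hm; omega
  have hTsplitPF : ∀ t ∈ T, t ∉ S → t ∈ PF S S :=
    fun t ht hts => (memPF t).2 ⟨fun m hm => ((memM _).1 (hTM t ht m hm)).1, hts⟩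
  have hKnonneg : ∀ x : ℤ, F - x ∉ S → 0 ≤ x := by
    intro x hx
    by_contra h
    exact hx (hFgt _ (by omega))
  have memK : ∀ x : ℤ, x ∈ stdK S F ↔ (0 ≤ x ∧ F - x ∉ S) := fun _ => Iff.rfl
  have hcrux : (∀ w : ℤ, F - w ∉ T → ∀ t ∈ T, t ≠ 0 → w + t ∈ maxId S) →
      ∀ x : ℤ, F - x ∉ S → ∀ t ∈ T, t ≠ 0 → x + t ∈ T := by
    intro hc x hx t ht htne
    by_contra h
    have h2 := hc (F - (x + t)) (by rw [sub_sub_cancel]; exact h) t ht htne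
    rw [show F - (x + t) + t = F - x by ring] at h2
    exact hx ((memM _).1 h2).1
  have main1 : IsGAS S F ↔ (∀ w : ℤ, F - w ∉ T → ∀ t ∈ T, t ≠ 0 → w + t ∈ maxId S) := by
    constructor
    · intro hgas w hw t ht htne
      have hwpos : 0 < w := by
        have := hTle _ hw; omega
      have htp := htpos t ht htne
      by_contra hc
      have hg : w + t ∉ S := fun hs => hc ((memM _).2 ⟨hs, by omega⟩)
      have hFwS : F - w ∉ S := fun hs => hw (hST hs)
      have hex : ∃ m ∈ maxId S, F - w + m ∉ maxId S := by
        by_contra hno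
        push_neg at hno
        exact hw ((memT _).2 hno)
      obtain ⟨m, hm, hmn⟩ := hex
      have hmp := hMpos m hm
      have hmS := ((memM m).1 hm).1
      have hh : F - w + m ∉ S := by
        intro hs
        apply hmn
        refine (memM _).2 ⟨hs, ?_⟩
        intro h0
        exact hg (hFgt _ (by omega))
      have hwnS : w ∉ S := by
        intro hws
        have h2 := hTM t ht w ((memM w).2 ⟨hws, by omega⟩)
        rw [show t + w = w + t by ring] at h2
        exact hg ((memM _).1 h2).1
      have hk1 : (w - m) ∈ stdK S F := by
        refine (memK _).2 ⟨?_, ?_⟩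
        · have := hgaple _ hh; omega
        · rw [show F - (w - m) = F - w + m by ring]; exact hh
      have hx1 : (F - (w + t)) ∈ stdK S F := by
        refine (memK _).2 ⟨?_, ?_⟩
        · have := hgaple _ hg; omega
        · rw [sub_sub_cancel]; exact hg
      have hz1 : (F - t - m) ∈ stdK S F + stdK S F := by
        rw [Set.mem_add]
        exact ⟨F - (w + t), hx1, w - m, hk1, by ring⟩
      have hz1K : (F - t - m) ∉ stdK S F := by
        intro hz
        have h2 := ((memK _).1 hz).2
        rw [show F - (F - t - m) = t + m by ring] at h2
        exact h2 ((memM _).1 (hTM t ht m hm)).1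
      rcases hgas with hKK | ⟨X, hmin, hpf, heq⟩
      · exact hz1K (hKK ▸ hz1)
      · have hz1D : (F - t - m) ∈ (fun x => F - x) '' (X : Set ℤ) ∪ {F} := by
          rw [← heq]; exact ⟨hz1, hz1K⟩
        rcases hz1D with h1 | h1
        · obtain ⟨s, hsX, hseq⟩ := h1
          replace hseq : F - s = F - t - m := hseq
          have hstm : s = t + m := by omega
          have hFmD : (F - m) ∈ (fun x => F - x) '' (X : Set ℤ) ∪ {F} := by
            rw [← heq]
            constructor
            · rw [Set.mem_add]
              refine ⟨w - m, hk1, F - w, (memK _).2 ⟨?_, ?_⟩, by ring⟩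
              · have := hgaple w hwnS; omega
              · rw [sub_sub_cancel]; exact hwnS
            · intro hz
              have h2 := ((memK _).1 hz).2
              rw [show F - (F - m) = m by ring] at h2
              exact h2 hmS
          have hmX : m ∈ (X : Set ℤ) := by
            rcases hFmD with h2 | h2
            · obtain ⟨s', hs'X, hs'eq⟩ := h2
              replace hs'eq : F - s' = F - m := hs'eq
              have : s' = m := by omega
              exact this ▸ hs'X
            · exfalso
              have h3 : F - m = F := h2
              omega
          by_cases htS : t ∈ S
          · have hmins : s ∈ maxId S \ (maxId S + maxId S) := hmin s (Finset.mem_coe.1 hsX)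
            apply hmins.2
            rw [Set.mem_add]
            exact ⟨t, (memM t).2 ⟨htS, htne⟩, m, hm, hstm.symm⟩
          · apply hpf s (Finset.mem_coe.1 hsX) m (Finset.mem_coe.1 hmX)
            rw [show s - m = t by omega]
            exact hTsplitPF t ht htS
        · have h3 : F - t - m = F := h1
          omega
    · intro hc
      have hcx := hcrux hc
      by_cases hKK : stdK S F + stdK S F ⊆ stdK S F
      · left
        refine Set.Subset.antisymm hKK (fun k hk => ?_)
        rw [Set.mem_add]
        refine ⟨k, hk, 0, (memK 0).2 ⟨le_refl 0, ?_⟩, add_zero k⟩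
        rw [sub_zero]; exact hFnot
      · right
        rw [Set.not_subset] at hKK
        obtain ⟨z0, hz0, hz0K⟩ := hKK
        rw [Set.mem_add] at hz0
        obtain ⟨a, ha, b, hb, hab⟩ := hz0
        have haK := (memK a).1 ha
        have hbK := (memK b).1 hb
        have hFKK : F ∈ stdK S F + stdK S F := by
          have hFz0 : F - z0 ∈ S := by
            have h1 : ¬ (0 ≤ z0 ∧ F - z0 ∉ S) := fun h => hz0K ((memK _).2 h)
            push_neg at h1
            exact h1 (by omega)
          by_cases hbS : b ∈ S
          · exfalso
            apply haK.2
            rw [show F - a = (F - z0) + b by omega]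
            exact hSadd _ hFz0 _ hbS
          · rw [Set.mem_add]
            refine ⟨F - b, (memK _).2 ⟨?_, ?_⟩, b, (memK _).2 ⟨hbK.1, hbK.2⟩, by ring⟩
            · have := hgaple b hbS; omega
            · rw [sub_sub_cancel]; exact hbS
        set Eset : Set ℤ := {s : ℤ | s ∈ maxId S ∧ ∃ x : ℤ, F - x ∉ S ∧ x + s ∉ S} with hEdef
        have memE : ∀ s : ℤ, s ∈ Eset ↔ (s ∈ maxId S ∧ ∃ x : ℤ, F - x ∉ S ∧ x + s ∉ S) :=
          fun _ => Iff.rfl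
        have hEsub : Eset ⊆ Set.Icc 0 F := by
          intro s hs
          obtain ⟨hsM, x, hx1, hx2⟩ := (memE s).1 hs
          have h1 := hSnn s ((memM s).1 hsM).1
          have h2 := hKnonneg x hx1
          have h3 := hgaple _ hx2
          exact ⟨h1, by omega⟩
        have hEfin : Eset.Finite := Set.Finite.subset (Set.finite_Icc 0 F) hEsub
        refine ⟨hEfin.toFinset, ?_, ?_, ?_⟩
        · intro s hsX
          rw [Set.Finite.mem_toFinset] at hsX
          obtain ⟨hsM, x, hx1, hx2⟩ := (memE s).1 hsX
          show s ∈ maxId S \ (maxId S + maxId S)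
          refine ⟨hsM, ?_⟩
          intro hsum
          rw [Set.mem_add] at hsum
          obtain ⟨m1, hm1, m2, hm2, h12⟩ := hsum
          have h1 : x + m1 ∈ T := hcx x hx1 m1 (hST ((memM m1).1 hm1).1) ((memM m1).1 hm1).2
          have h2 := hTM _ h1 m2 hm2
          apply hx2
          rw [show x + s = x + m1 + m2 by omega]
          exact ((memM _).1 h2).1
        · intro s hsX s' hs'X hf
          rw [Set.Finite.mem_toFinset] at hsX hs'X
          obtain ⟨hsM, x, hx1, hx2⟩ := (memE s).1 hsX
          obtain ⟨hs'M, -⟩ := (memE s').1 hs'X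
          obtain ⟨hfT, hfpos⟩ := hPFT _ hf
          have h1 : x + (s - s') ∈ T := hcx x hx1 _ hfT (by omega)
          have h2 := hTM _ h1 s' hs'M
          apply hx2
          rw [show x + s = x + (s - s') + s' by ring]
          exact ((memM _).1 h2).1
        · ext z
          constructor
          · rintro ⟨hzKK, hzK⟩
            rw [Set.mem_add] at hzKK
            obtain ⟨a', ha', b', hb', hab'⟩ := hzKK
            have ha'K := (memK a').1 ha'
            have hb'K := (memK b').1 hb'
            have hFz : F - z ∈ S := by
              have h1 : ¬ (0 ≤ z ∧ F - z ∉ S) := fun h => hzK ((memK _).2 h)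
              push_neg at h1
              exact h1 (by omega)
            by_cases hzF : z = F
            · exact Or.inr (by rw [hzF]; rfl)
            · refine Or.inl ?_
              rw [Set.Finite.coe_toFinset]
              refine ⟨F - z, (memE _).2 ⟨(memM _).2 ⟨hFz, fun h0 => hzF (by omega)⟩,
                a', ha'K.2, ?_⟩, by ring⟩
              rw [show a' + (F - z) = F - b' by omega]
              exact hb'K.2
          · intro hz
            rcases hz with h1 | h1
            · rw [Set.Finite.coe_toFinset] at h1
              obtain ⟨s, hsE, hseq⟩ := h1
              replace hseq : F - s = z := hseq
              obtain ⟨hsM, x, hx1, hx2⟩ := (memE s).1 hsE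
              constructor
              · rw [Set.mem_add]
                refine ⟨x, (memK x).2 ⟨hKnonneg x hx1, hx1⟩, F - s - x, (memK _).2 ⟨?_, ?_⟩,
                  by omega⟩
                · have := hgaple _ hx2; omega
                · rw [show F - (F - s - x) = x + s by ring]; exact hx2
              · intro hzz
                have h2 := ((memK z).1 hzz).2
                apply h2
                rw [show F - z = s by omega]
                exact ((memM s).1 hsM).1
            · have h1' : z = F := h1
              rw [h1']
              refine ⟨hFKK, fun hzz => ((memK F).1 hzz).2 ?_⟩
              rw [sub_self]; exact hS0
  have hFrobI : IsFrobOf ((fun m => m - e) '' maxId S) (F - e) := by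
    constructor
    · rintro ⟨m, hm, hme⟩
      replace hme : m - e = F - e := hme
      have hmF : m = F := by omega
      exact hFnot (hmF ▸ ((memM m).1 hm).1)
    · intro z hz
      exact ⟨z + e, hMF _ (by omega), by ring⟩
  have main2 : IsAlmostCanonical T FMM ((fun m => m - e) '' maxId S) ↔
      (∀ w : ℤ, F - w ∉ T → ∀ t ∈ T, t ≠ 0 → w + t ∈ maxId S) := by
    constructor
    · rintro ⟨FI, hfrob, heq⟩ w hw t ht htne
      have hFIe : FI = F - e := frob_unique hfrob hFrobI
      subst hFIe
      have hwge : F - FMM ≤ w := by have := hTle _ hw; omega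
      have hy : (w - F + FMM) ∈ stdK T FMM ∪ {FMM} := by
        refine Or.inl ⟨by omega, ?_⟩
        rw [show FMM - (w - F + FMM) = F - w by ring]
        exact hw
      rw [← heq] at hy
      have h2 := hy t ⟨ht, htne⟩
      obtain ⟨i, hiI, hival⟩ := h2
      obtain ⟨mm, hmm, hmi⟩ := hiI
      replace hival : i + (FMM - (F - e)) = w - F + FMM + t := hival
      replace hmi : mm - e = i := hmi
      have hmmeq : mm = w + t := by omega
      exact hmmeq ▸ hmm
    · intro hc
      refine ⟨F - e, hFrobI, ?_⟩
      ext y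
      constructor
      · intro hy
        have hy' : ∀ t ∈ T, t ≠ 0 → y + t + F - FMM ∈ maxId S := by
          intro t ht htne
          obtain ⟨i, hiI, hival⟩ := hy t ⟨ht, htne⟩
          obtain ⟨mm, hmm, hmi⟩ := hiI
          replace hival : i + (FMM - (F - e)) = y + t := hival
          replace hmi : mm - e = i := hmi
          have hmmeq : mm = y + t + F - FMM := by omega
          exact hmmeq ▸ hmm
        by_cases hyF : y = FMM
        · exact Or.inr (by rw [hyF]; rfl)
        · refine Or.inl ?_
          have h1 : FMM - y ∉ T := by
            intro hcT
            have h2 := hy' (FMM - y) hcT (by omega)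
            rw [show y + (FMM - y) + F - FMM = F by ring] at h2
            exact hFnot ((memM F).1 h2).1
          refine ⟨?_, h1⟩
          have := hTle _ h1; omega
      · intro hy
        rintro t ⟨ht, htne⟩
        replace htne : t ≠ 0 := htne
        rcases hy with h1 | h1
        · obtain ⟨hy0, hyT⟩ := h1
          have h2 := hc (y + F - FMM)
            (by rw [show F - (y + F - FMM) = FMM - y by ring]; exact hyT) t ht htne
          refine ⟨y + t + F - FMM - e, ⟨y + F - FMM + t, h2, ?_⟩, ?_⟩
          · show y + F - FMM + t - e = y + t + F - FMM - e
            ring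
          · show y + t + F - FMM - e + (FMM - (F - e)) = y + t
            ring
        · have h1' : y = FMM := h1
          have htp := htpos t ht htne
          refine ⟨y + t + F - FMM - e, ⟨F + t, hMF _ (by omega), ?_⟩, ?_⟩
          · show F + t - e = y + t + F - FMM - e
            omega
          · show y + t + F - FMM - e + (FMM - (F - e)) = y + t
            ring
  exact main1.trans main2.symm
end

section
/- Let S be a numerical semigroup of type 2 that is not almost symmetric, with PF(S) = {f, F(S)}. Then S is GAS if and only if F(S) = 2f − x for some minimal generator x of S. Moreover, in this case, if n is the minimum integer with n(F(S) − f) ∈ S, then |2K \ K| = 2, |rK \ (r−1)K| = 1 for all 3 ≤ r ≤ n − 1, and nK = (n−1)K. -/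
open Set Pointwise

lemma sg_add {S : Set ℤ} (hS : IsNumSgrp S) {a b : ℤ} (ha : a ∈ S) (hb : b ∈ S) :
    a + b ∈ S := hS.2.1 a ha b hb

/-- Key lemma: every gap is dominated by a pseudo-Frobenius number. -/
lemma key3 {S : Set ℤ} (hS : IsNumSgrp S) {F f : ℤ} (hF : IsFrobOf S F)
    (hPF : PF S S = {f, F}) :
    ∀ g : ℤ, g ∉ S → (f - g ∈ S ∨ F - g ∈ S) := by
  have main : ∀ N : ℕ, ∀ g : ℤ, (F - g).toNat ≤ N → g ∉ S → (f - g ∈ S ∨ F - g ∈ S) := by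
    intro N
    induction N with
    | zero =>
      intro g hle hg
      have hgF : g ≤ F := by
        by_contra h
        exact hg (hF.2 g (by omega))
      have hge : g = F := by omega
      right
      rw [hge, sub_self]
      exact hS.1
    | succ n ih =>
      intro g hle hg
      by_cases hsub : ∀ j ∈ maxId S, g + j ∈ S
      · have hmem : g ∈ PF S S := ⟨hsub, hg⟩
        rw [hPF] at hmem
        rcases hmem with h | h
        · left; rw [show f - g = 0 by rw [h]; ring]; exact hS.1
        · right; rw [show F - g = 0 by rw [h]; ring]; exact hS.1
      · push_neg at hsub
        obtain ⟨m, hm, hgm⟩ := hsub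
        obtain ⟨hmS, hm0'⟩ := hm
        have hm0 : 0 < m := by
          have := hS.2.2.1 m hmS
          simp only [mem_singleton_iff] at hm0'
          omega
        have hgF : g ≤ F := by
          by_contra h
          exact hg (hF.2 g (by omega))
        have hgmF : g + m ≤ F := by
          by_contra h
          exact hgm (hF.2 _ (by omega))
        rcases ih (g + m) (by omega) hgm with h | h
        · left
          have := sg_add hS h hmS
          rwa [show f - (g + m) + m = f - g by ring] at this
        · right
          have := sg_add hS h hmS
          rwa [show F - (g + m) + m = F - g by ring] at this
  intro g hg
  exact main (F - g).toNat g le_rfl hg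

theorem stmt19 (S : Set ℤ) (hS : IsNumSgrp S) (F f : ℤ) (hF : IsFrobOf S F)
    (hPF : PF S S = {f, F}) (hfF : f ≠ F) (hnas : ¬ IsAlmostSym S F) :
    (IsGAS S F ↔ ∃ x : ℤ, IsMinGen S x ∧ F = 2 * f - x) ∧
    (IsGAS S F → ∀ n : ℕ, 0 < n → (n : ℤ) * (F - f) ∈ S →
      (∀ m : ℕ, 0 < m → m < n → (m : ℤ) * (F - f) ∉ S) →
      ((nK (stdK S F) 2 \ stdK S F).ncard = 2 ∧
       (∀ r : ℕ, 3 ≤ r → r ≤ n - 1 →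
          (nK (stdK S F) r \ nK (stdK S F) (r - 1)).ncard = 1) ∧
       nK (stdK S F) n = nK (stdK S F) (n - 1))) := by
  have h0 : (0:ℤ) ∈ S := hS.1
  have hadd : ∀ a ∈ S, ∀ b ∈ S, a + b ∈ S := hS.2.1
  have hnn : ∀ a ∈ S, 0 ≤ a := hS.2.2.1
  have hFS : F ∉ S := hF.1
  have hfmem : f ∈ PF S S := by
    have : f ∈ ({f, F} : Set ℤ) := by simp
    rwa [← hPF] at this
  obtain ⟨hfsub, hfS⟩ := hfmem
  have hfadd : ∀ m, m ∈ S → m ≠ 0 → f + m ∈ S := by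
    intro m h1 h2
    exact hfsub m ⟨h1, by simpa using h2⟩
  have hfpos : 0 < f := by
    by_contra h
    push_neg at h
    have hf0 : f ≠ 0 := fun e => hfS (e ▸ h0)
    have hFf : F - f ∈ S := hF.2 _ (by omega)
    have : f + (F - f) ∈ S := hfadd _ hFf (by intro e; apply hfF; omega)
    rw [show f + (F - f) = F by ring] at this
    exact hFS this
  have hfF' : f < F := by
    by_contra h
    push_neg at h
    exact hfS (hF.2 f (by omega))
  obtain ⟨d, hd⟩ : ∃ d : ℤ, d = F - f := ⟨F - f, rfl⟩
  obtain ⟨x0, hx0⟩ : ∃ x : ℤ, x = 2 * f - F := ⟨2 * f - F, rfl⟩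
  have hdpos : 0 < d := by omega
  have hdS : d ∉ S := by
    intro h
    have := hfadd d h (by omega)
    rw [show f + d = F by rw [hd]; ring] at this
    exact hFS this
  have hxS : x0 ∈ S := by
    rcases key3 hS hF hPF d hdS with h | h
    · rwa [show f - d = x0 by rw [hd, hx0]; ring] at h
    · exfalso; rw [show F - d = f by rw [hd]; ring] at h; exact hfS h
  -- not almost symmetric forces f ≠ d
  have hfd : f ≠ d := by
    intro hfe
    apply hnas
    unfold IsAlmostSym
    ext z
    constructor
    · intro hz
      by_cases hzS : z ∈ S
      · left
        refine ⟨hnn z hzS, fun hc => hFS ?_⟩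
        have := hadd _ hc _ hzS
        rwa [show F - z + z = F by ring] at this
      · have : z ∈ PF S S := ⟨hz, hzS⟩
        rw [hPF] at this
        rcases this with h | h
        · left
          refine ⟨by omega, ?_⟩
          rw [h, ← hd]
          exact hdS
        · right; simpa using h
    · intro hz
      have hSsub : ∀ s ∈ S, s ∈ subI S (maxId S) := by
        intro s hs j hj
        exact hadd s hs j hj.1
      rcases hz with hz | hz
      · obtain ⟨hz0, hFz⟩ := hz
        rcases key3 hS hF hPF (F - z) hFz with h | h
        · rw [show f - (F - z) = z - f by omega] at h
          by_cases hzf : z - f = 0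
          · have : z = f := by omega
            rw [this]; exact hfsub
          · have : f + (z - f) ∈ S := hfadd _ h hzf
            rw [show f + (z - f) = z by ring] at this
            exact hSsub z this
        · rw [show F - (F - z) = z by ring] at h
          exact hSsub z h
      · simp only [mem_singleton_iff] at hz
        subst hz
        intro j hj
        have hj0 : 0 < j := by
          have := hnn j hj.1
          have : j ≠ 0 := by simpa using hj.2
          omega
        exact hF.2 _ (by omega)
  have hx0ne : x0 ≠ 0 := by omega
  have hx0pos : 0 < x0 := by
    have := hnn _ hxS
    omega
  have h2dS : 2 * d ∉ S := by
    intro h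
    have := hadd _ hxS _ h
    rw [show x0 + 2 * d = F by rw [hx0, hd]; ring] at this
    exact hFS this
  -- membership in the canonical ideal
  have hK : ∀ z : ℤ, z ∈ stdK S F ↔ (z ∈ S ∨ z - d ∈ S) := by
    intro z
    constructor
    · rintro ⟨hz0, hFz⟩
      rcases key3 hS hF hPF (F - z) hFz with h | h
      · right; rwa [show f - (F - z) = z - d by rw [hd]; ring] at h
      · left; rwa [show F - (F - z) = z by ring] at h
    · rintro (h | h)
      · refine ⟨hnn z h, fun hc => hFS ?_⟩
        have := hadd _ hc _ h
        rwa [show F - z + z = F by ring] at this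
      · refine ⟨by have := hnn _ h; omega, fun hc => hfS ?_⟩
        have := hadd _ hc _ h
        rwa [show F - z + (z - d) = f by rw [hd]; ring] at this
  -- core combinatorial lemma
  have hcore : IsMinGen S x0 → ∀ s, s ∈ S → d + s ∉ S → s = 0 ∨ s = x0 := by
    intro hmg s hs hds
    by_cases h0s : s = 0
    · left; exact h0s
    · right
      by_contra hsx
      rcases key3 hS hF hPF (d + s) hds with h | h
      · rw [show f - (d + s) = x0 - s by rw [hx0, hd]; ring] at h
        apply hmg.2
        have hmem : s + (x0 - s) ∈ maxId S + maxId S :=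
          Set.add_mem_add ⟨hs, by simpa using h0s⟩
            ⟨h, by simpa using (by omega : x0 - s ≠ 0)⟩
        rwa [show s + (x0 - s) = x0 by ring] at hmem
      · apply hfS
        have := hadd _ h _ hs
        rwa [show F - (d + s) + s = f by rw [hd]; ring] at this
  -- membership in 2K \ K
  have h2Kmem : ∀ z : ℤ, z ∈ (stdK S F + stdK S F) \ stdK S F ↔
      (z - 2 * d ∈ S ∧ z ∉ S ∧ z - d ∉ S) := by
    intro z
    constructor
    · rintro ⟨hz2, hzK⟩
      rw [hK] at hzK
      push_neg at hzK
      obtain ⟨hz1, hz2'⟩ := hzK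
      refine ⟨?_, hz1, hz2'⟩
      rw [Set.mem_add] at hz2
      obtain ⟨a, ha, b, hb, hab⟩ := hz2
      rw [hK] at ha hb
      rcases ha with ha | ha <;> rcases hb with hb | hb
      · exact absurd (hab ▸ hadd _ ha _ hb) hz1
      · exfalso; apply hz2'
        have := hadd _ ha _ hb
        rwa [show a + (b - d) = a + b - d by ring, hab] at this
      · exfalso; apply hz2'
        have := hadd _ ha _ hb
        rwa [show a - d + b = a + b - d by ring, hab] at this
      · have := hadd _ ha _ hb
        rwa [show a - d + (b - d) = a + b - 2 * d by ring, hab] at this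
    · rintro ⟨h2, hz1, hz2'⟩
      constructor
      · rw [Set.mem_add]
        refine ⟨z - d, ?_, d, ?_, by ring⟩
        · rw [hK]; right
          rwa [show z - d - d = z - 2 * d by ring]
        · rw [hK]; right
          rw [sub_self]; exact h0
      · rw [hK]; push_neg; exact ⟨hz1, hz2'⟩
  -- the 2K \ K set when x0 is a minimal generator
  have h2Kset : IsMinGen S x0 → (stdK S F + stdK S F) \ stdK S F = {2 * d, F} := by
    intro hmg
    ext z
    rw [h2Kmem]
    constructor
    · rintro ⟨h2, hz1, hz2'⟩
      have hds : d + (z - 2 * d) ∉ S := by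
        rwa [show d + (z - 2 * d) = z - d by ring]
      rcases hcore hmg _ h2 hds with h | h
      · left; omega
      · right; simp only [mem_singleton_iff]; omega
    · intro hz
      simp only [mem_insert_iff, mem_singleton_iff] at hz
      rcases hz with h | h
      · rw [h]
        refine ⟨by rw [show 2 * d - 2 * d = 0 by ring]; exact h0, h2dS, ?_⟩
        rwa [show 2 * d - d = d by ring]
      · rw [h]
        refine ⟨by rw [show F - 2 * d = x0 by rw [hx0, hd]; ring]; exact hxS, hFS, ?_⟩
        rw [show F - d = f by rw [hd]; ring]
        exact hfS
  -- GAS implies x0 is a minimal generator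
  have hmg_of_gas : IsGAS S F → IsMinGen S x0 := by
    rintro (h1 | ⟨X, hXmg, _, hXeq⟩)
    · exfalso
      have hdK : d ∈ stdK S F := by
        rw [hK]; right; rw [sub_self]; exact h0
      have : d + d ∈ stdK S F + stdK S F := Set.add_mem_add hdK hdK
      rw [h1, hK] at this
      rcases this with h | h
      · apply h2dS; rwa [show 2 * d = d + d by ring]
      · apply hdS; rwa [show d + d - d = d by ring] at h
    · have h2dmem : 2 * d ∈ (stdK S F + stdK S F) \ stdK S F := by
        rw [h2Kmem]
        refine ⟨by rw [sub_self]; exact h0, h2dS, ?_⟩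
        rwa [show 2 * d - d = d by ring]
      rw [hXeq] at h2dmem
      rcases h2dmem with ⟨y, hyX, hye⟩ | h
      · simp only at hye
        have : y = x0 := by omega
        subst this
        exact hXmg _ (by exact_mod_cast hyX)
      · exfalso
        simp only [mem_singleton_iff] at h
        omega
  refine ⟨⟨?_, ?_⟩, ?_⟩
  · -- GAS → ∃ min gen
    intro hgas
    exact ⟨x0, hmg_of_gas hgas, by omega⟩
  · -- min gen → GAS
    rintro ⟨x', hx'mg, hx'e⟩
    have hxx : x' = x0 := by omega
    right
    refine ⟨({x'} : Finset ℤ), ?_, ?_, ?_⟩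
    · intro y hy
      simp only [Finset.mem_singleton] at hy
      rw [hy]; exact hx'mg
    · intro a ha b hb
      simp only [Finset.mem_singleton] at ha hb
      subst ha; subst hb
      rw [sub_self, hPF]
      intro hc
      rcases hc with h | h
      · omega
      · simp only [mem_singleton_iff] at h; omega
    · rw [h2Kset (hxx ▸ hx'mg)]
      ext z
      simp only [Finset.coe_singleton, Set.image_singleton, mem_union, mem_singleton_iff,
        mem_insert_iff]
      constructor
      · rintro (h | h)
        · left; omega
        · right; exact h
      · rintro (h | h)
        · left; omega
        · right; exact h
  · -- the "moreover" part
    intro hgas n hn hnd hmin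
    rw [← hd] at hnd
    have hmin' : ∀ m : ℕ, 0 < m → m < n → (m : ℤ) * d ∉ S := by
      intro m hm1 hm2
      rw [hd]
      exact hmin m hm1 hm2
    have hmg : IsMinGen S x0 := hmg_of_gas hgas
    have hn3 : 3 ≤ n := by
      by_contra h
      push_neg at h
      interval_cases n
      · apply hdS; simpa using hnd
      · apply h2dS
        have : ((2:ℕ):ℤ) * d = 2 * d := by push_cast; ring
        rwa [this] at hnd
    -- characterization of nK
    have hnK : ∀ r : ℕ, ∀ z : ℤ, z ∈ nK (stdK S F) (r + 1) ↔
        ∃ i : ℕ, i ≤ r + 1 ∧ z - (i : ℤ) * d ∈ S := by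
      intro r
      induction r with
      | zero =>
        intro z
        show z ∈ stdK S F ↔ _
        rw [hK]
        constructor
        · rintro (h | h)
          · exact ⟨0, by omega, by simpa using h⟩
          · exact ⟨1, by omega, by simpa using h⟩
        · rintro ⟨i, hi, his⟩
          interval_cases i
          · left; simpa using his
          · right; simpa using his
      | succ m ih =>
        intro z
        show z ∈ nK (stdK S F) (m + 1) + stdK S F ↔ _
        rw [Set.mem_add]
        constructor
        · rintro ⟨a, ha, b, hb, hab⟩
          obtain ⟨i, hi, his⟩ := (ih a).1 ha
          rw [hK] at hb
          rcases hb with hb | hb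
          · refine ⟨i, by omega, ?_⟩
            have := hadd _ his _ hb
            rwa [show a - (i:ℤ) * d + b = a + b - (i:ℤ) * d by ring, hab] at this
          · refine ⟨i + 1, by omega, ?_⟩
            have := hadd _ his _ hb
            rw [show a - (i:ℤ) * d + (b - d) = a + b - ((i:ℤ) + 1) * d by ring, hab] at this
            rwa [show ((i+1:ℕ):ℤ) = (i:ℤ) + 1 by push_cast; ring]
        · rintro ⟨i, hi, his⟩
          by_cases hile : i ≤ m + 1
          · refine ⟨z, (ih z).2 ⟨i, hile, his⟩, 0, ?_, by ring⟩
            rw [hK]; left; exact h0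
          · have hieq : i = m + 2 := by omega
            subst hieq
            refine ⟨z - d, (ih _).2 ⟨m + 1, le_rfl, ?_⟩, d, ?_, by ring⟩
            · rwa [show z - d - ((m+1:ℕ):ℤ) * d = z - ((m+2:ℕ):ℤ) * d by push_cast; ring]
            · rw [hK]; right; rw [sub_self]; exact h0
    refine ⟨?_, ?_, ?_⟩
    · -- |2K \ K| = 2
      have he : nK (stdK S F) 2 = stdK S F + stdK S F := rfl
      rw [he, h2Kset hmg, Set.ncard_pair (by omega : 2 * d ≠ F)]
    · -- |rK \ (r-1)K| = 1
      intro r hr3 hrn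
      obtain ⟨m, rfl⟩ : ∃ m, r = m + 3 := ⟨r - 3, by omega⟩
      have hset : nK (stdK S F) (m + 3) \ nK (stdK S F) (m + 2) = {((m:ℤ) + 3) * d} := by
        ext z
        simp only [mem_diff, mem_singleton_iff]
        rw [show m + 3 = (m + 2) + 1 from rfl, hnK (m + 2), show m + 2 = (m + 1) + 1 from rfl,
          hnK (m + 1)]
        constructor
        · rintro ⟨⟨i, hi, his⟩, hnot⟩
          push_neg at hnot
          have hieq : i = m + 3 := by
            by_contra hne
            exact hnot i (by omega) his
          subst hieq
          have hs : z - ((m:ℤ) + 3) * d ∈ S := by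
            rwa [show ((m+3:ℕ):ℤ) = (m:ℤ) + 3 by push_cast; ring] at his
          have hds : d + (z - ((m:ℤ) + 3) * d) ∉ S := by
            have := hnot (m + 2) (by omega)
            rwa [show z - ((m+2:ℕ):ℤ) * d = d + (z - ((m:ℤ) + 3) * d) by push_cast; ring] at this
          rcases hcore hmg _ hs hds with h | h
          · omega
          · exfalso
            have h3 := hnot m (by omega)
            apply h3
            rw [show z - (m:ℤ) * d = (z - ((m:ℤ) + 3) * d) + 3 * d by ring, h,
              show x0 + 3 * d = F + d by rw [hx0, hd]; ring]
            exact hF.2 _ (by omega)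
        · rintro rfl
          constructor
          · refine ⟨m + 3, le_rfl, ?_⟩
            rw [show ((m:ℤ) + 3) * d - ((m+3:ℕ):ℤ) * d = 0 by push_cast; ring]
            exact h0
          · intro hc
            obtain ⟨i, hi, his⟩ := hc
            apply hmin' (m + 3 - i) (by omega) (by omega)
            rwa [show ((m+3-i:ℕ):ℤ) * d = ((m:ℤ) + 3) * d - (i:ℤ) * d by
              rw [Nat.cast_sub (by omega)]; push_cast; ring]
      rw [show m + 3 - 1 = m + 2 from rfl, hset, Set.ncard_singleton]
    · -- nK n = nK (n-1)
      obtain ⟨m, rfl⟩ : ∃ m, n = m + 3 := ⟨n - 3, by omega⟩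
      ext z
      rw [show m + 3 - 1 = m + 2 from rfl, show m + 3 = (m + 2) + 1 from rfl, hnK (m + 2),
        show m + 2 = (m + 1) + 1 from rfl, hnK (m + 1)]
      constructor
      · rintro ⟨i, hi, his⟩
        by_cases hile : i ≤ m + 2
        · exact ⟨i, hile, his⟩
        · have hieq : i = m + 3 := by omega
          subst hieq
          refine ⟨0, by omega, ?_⟩
          have := hadd _ his _ hnd
          rwa [show z - ((m+3:ℕ):ℤ) * d + (m+3:ℕ) * d = z - (0:ℕ) * d by push_cast; ring] at this
      · rintro ⟨i, hi, his⟩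
        exact ⟨i, by omega, his⟩
end
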